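/- arXiv:2307.07241 — 2 statements merged into one kernel-verified Lean document; each statement's English description precedes it below -/
import Mathlib

section
/- For every real θ with 0 ≤ θ < ((log 3 − 1)/40) · (m−1)/(m·d), the almost-sure limit W_∞ of the normalized Galton–Watson martingale has a finite exponential moment: E[ exp(θ·W_∞) ] < ∞. -/
open MeasureTheory ProbabilityTheory Filter
open scoped ENNReal

namespace GWaux

noncomputable def psi (μ : MeasureTheory.Measure ℕ) (t : ℝ) : ℝ≥0∞ :=
  ∑' k : ℕ, ENNReal.ofReal (Real.exp (t * k)) * μ {k}

def Falg {Ω : Type*} (ξ : ℕ → ℕ → Ω → ℕ) (n : ℕ) : MeasurableSpace Ω :=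
  ⨆ p ∈ {q : ℕ × ℕ | q.1 < n}, MeasurableSpace.comap (ξ p.1 p.2) inferInstance

variable {Ω : Type*} [mΩ : MeasurableSpace Ω] (P : MeasureTheory.Measure Ω)
  [MeasureTheory.IsProbabilityMeasure P]
  (μ : MeasureTheory.Measure ℕ) (ξ : ℕ → ℕ → Ω → ℕ)

lemma Falg_le (hmeas : ∀ n i, Measurable (ξ n i)) (n : ℕ) : Falg ξ n ≤ mΩ :=
  iSup₂_le fun p _ => measurable_iff_comap_le.1 (hmeas p.1 p.2)

lemma Falg_mono (n : ℕ) : Falg ξ n ≤ Falg ξ (n + 1) :=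
  biSup_mono fun p hp => Nat.lt_succ_of_lt hp

lemma psi_eq (t : ℝ) : psi μ t = ∫⁻ k, ENNReal.ofReal (Real.exp (t * k)) ∂μ :=
  (lintegral_countable' _).symm

lemma gw_mgf (hmeas : ∀ n i, Measurable (ξ n i))
    (hlaw : ∀ n i, MeasureTheory.Measure.map (ξ n i) P = μ) (n i : ℕ) (t : ℝ) :
    ∫⁻ ω, ENNReal.ofReal (Real.exp (t * ξ n i ω)) ∂P = psi μ t := by
  rw [psi_eq, ← hlaw n i,
    lintegral_map (f := fun k : ℕ => ENNReal.ofReal (Real.exp (t * k)))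
      measurable_from_nat (hmeas n i)]

set_option maxHeartbeats 1000000 in
lemma gwL1 (hmeas : ∀ n i, Measurable (ξ n i))
    (hlaw : ∀ n i, MeasureTheory.Measure.map (ξ n i) P = μ)
    (hindep : ProbabilityTheory.iIndepFun
      (fun p : ℕ × ℕ => ξ p.1 p.2) P)
    (n j : ℕ) (t : ℝ) (f : Ω → ℝ≥0∞) (hf : Measurable[Falg ξ n] f) :
    ∫⁻ ω, f ω * ∏ i ∈ Finset.range j, ENNReal.ofReal (Real.exp (t * ξ n i ω)) ∂P
      = (∫⁻ ω, f ω ∂P) * psi μ t ^ j := by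
  induction j with
  | zero => simp
  | succ j ih =>
    have hM1le : (⨆ p ∈ {q : ℕ × ℕ | q.1 < n ∨ (q.1 = n ∧ q.2 < j)},
        MeasurableSpace.comap (ξ p.1 p.2) inferInstance) ≤ mΩ :=
      iSup₂_le fun p _ => measurable_iff_comap_le.1 (hmeas p.1 p.2)
    have hdisj : Disjoint {q : ℕ × ℕ | q.1 < n ∨ (q.1 = n ∧ q.2 < j)}
        ({(n, j)} : Set (ℕ × ℕ)) := by
      rw [Set.disjoint_singleton_right]
      simp
    have hind0 := ProbabilityTheory.indep_iSup_of_disjoint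
      (m := fun p : ℕ × ℕ => MeasurableSpace.comap (ξ p.1 p.2) inferInstance)
      (fun p => measurable_iff_comap_le.1 (hmeas p.1 p.2)) hindep.iIndep hdisj
    have hind :
        ProbabilityTheory.Indep
          (⨆ p ∈ {q : ℕ × ℕ | q.1 < n ∨ (q.1 = n ∧ q.2 < j)},
            MeasurableSpace.comap (ξ p.1 p.2) inferInstance)
          (MeasurableSpace.comap (ξ n j) inferInstance) P :=
      ProbabilityTheory.indep_of_indep_of_le_right hind0
        (le_biSup (fun p : ℕ × ℕ => MeasurableSpace.comap (ξ p.1 p.2) inferInstance)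
          (Set.mem_singleton (n, j)))
    have hfM1 : Measurable[⨆ p ∈ {q : ℕ × ℕ | q.1 < n ∨ (q.1 = n ∧ q.2 < j)},
        MeasurableSpace.comap (ξ p.1 p.2) inferInstance] f :=
      hf.mono (biSup_mono fun p hp => Or.inl hp) le_rfl
    have hprodM1 : Measurable[⨆ p ∈ {q : ℕ × ℕ | q.1 < n ∨ (q.1 = n ∧ q.2 < j)},
        MeasurableSpace.comap (ξ p.1 p.2) inferInstance]
        (fun ω => ∏ i ∈ Finset.range j, ENNReal.ofReal (Real.exp (t * ξ n i ω))) := by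
      refine Finset.measurable_prod _ fun i hi => ?_
      have hcont : Measurable (fun k : ℕ => ENNReal.ofReal (Real.exp (t * k))) :=
        measurable_from_nat
      refine hcont.comp ?_
      rw [measurable_iff_comap_le]
      exact le_biSup (fun p : ℕ × ℕ => MeasurableSpace.comap (ξ p.1 p.2) inferInstance)
        (show ((n, i) : ℕ × ℕ) ∈ {q : ℕ × ℕ | q.1 < n ∨ (q.1 = n ∧ q.2 < j)} from
          Or.inr ⟨rfl, Finset.mem_range.1 hi⟩)
    have hgM : Measurable[MeasurableSpace.comap (ξ n j) inferInstance]
        (fun ω => ENNReal.ofReal (Real.exp (t * ξ n j ω))) := by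
      have hcont : Measurable (fun k : ℕ => ENNReal.ofReal (Real.exp (t * k))) :=
        measurable_from_nat
      have hξj : Measurable[MeasurableSpace.comap (ξ n j) inferInstance] (ξ n j) :=
        Measurable.of_comap_le le_rfl
      exact hcont.comp hξj
    have key := lintegral_mul_eq_lintegral_mul_lintegral_of_independent_measurableSpace
      hM1le (measurable_iff_comap_le.1 (hmeas n j)) hind
      (hfM1.mul hprodM1) hgM
    calc ∫⁻ ω, f ω * ∏ i ∈ Finset.range (j+1), ENNReal.ofReal (Real.exp (t * ξ n i ω)) ∂P
        = ∫⁻ ω, (f ω * ∏ i ∈ Finset.range j, ENNReal.ofReal (Real.exp (t * ξ n i ω)))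
            * ENNReal.ofReal (Real.exp (t * ξ n j ω)) ∂P := by
          congr 1; funext ω; rw [Finset.prod_range_succ, mul_assoc]
      _ = (∫⁻ ω, f ω * ∏ i ∈ Finset.range j, ENNReal.ofReal (Real.exp (t * ξ n i ω)) ∂P)
            * ∫⁻ ω, ENNReal.ofReal (Real.exp (t * ξ n j ω)) ∂P := key
      _ = ((∫⁻ ω, f ω ∂P) * psi μ t ^ j) * psi μ t := by
          rw [ih, gw_mgf P μ ξ hmeas hlaw]
      _ = (∫⁻ ω, f ω ∂P) * psi μ t ^ (j+1) := by rw [mul_assoc, pow_succ]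

lemma gwZF (hmeas : ∀ n i, Measurable (ξ n i)) (Z : ℕ → Ω → ℕ)
    (hZ0 : ∀ ω, Z 0 ω = 1)
    (hZsucc : ∀ n ω, Z (n + 1) ω = ∑ i ∈ Finset.range (Z n ω), ξ n i ω) :
    ∀ n, Measurable[Falg ξ n] (Z n) := by
  intro n
  induction n with
  | zero =>
    have h : Z 0 = fun _ => 1 := funext hZ0
    rw [h]
    exact measurable_const
  | succ n ih =>
    have hξF : ∀ i, Measurable[Falg ξ (n+1)] (ξ n i) := by
      intro i
      rw [measurable_iff_comap_le]
      exact le_biSup (fun p : ℕ × ℕ => MeasurableSpace.comap (ξ p.1 p.2) inferInstance)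
        (show ((n, i) : ℕ × ℕ) ∈ {q : ℕ × ℕ | q.1 < n + 1} from Nat.lt_succ_self n)
    apply @measurable_to_countable' ℕ Ω _ _ (Falg ξ (n+1))
    intro k
    have hset : Z (n+1) ⁻¹' {k} = ⋃ j : ℕ,
        (Z n ⁻¹' {j}) ∩ ((fun ω => ∑ i ∈ Finset.range j, ξ n i ω) ⁻¹' {k}) := by
      ext ω
      simp only [Set.mem_preimage, Set.mem_singleton_iff, Set.mem_iUnion, Set.mem_inter_iff]
      constructor
      · intro h; exact ⟨Z n ω, rfl, by rw [← hZsucc n ω]; exact h⟩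
      · rintro ⟨j, h1, h2⟩; rw [hZsucc n ω, h1]; exact h2
    rw [hset]
    exact MeasurableSet.iUnion fun j =>
      (Falg_mono ξ n _ (ih (measurableSet_singleton j))).inter
        ((Finset.measurable_sum (Finset.range j) fun i _ => hξF i) (measurableSet_singleton k))

lemma gw_decomp (Z : Ω → ℕ) (hZ : Measurable Z) (g : ℕ → ℝ≥0∞) :
    ∫⁻ ω, g (Z ω) ∂P = ∑' j : ℕ, g j * P (Z ⁻¹' {j}) := by
  have h2 : ∫⁻ k, g k ∂(MeasureTheory.Measure.map Z P) = ∫⁻ ω, g (Z ω) ∂P :=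
    lintegral_map (f := g) measurable_from_nat hZ
  have h1 : ∫⁻ k, g k ∂(MeasureTheory.Measure.map Z P)
      = ∑' j : ℕ, g j * (MeasureTheory.Measure.map Z P) {j} := lintegral_countable' _
  rw [← h2, h1]
  congr 1
  funext j
  rw [MeasureTheory.Measure.map_apply hZ (measurableSet_singleton j)]

lemma gwL2 (hmeas : ∀ n i, Measurable (ξ n i))
    (hlaw : ∀ n i, MeasureTheory.Measure.map (ξ n i) P = μ)
    (hindep : ProbabilityTheory.iIndepFun
      (fun p : ℕ × ℕ => ξ p.1 p.2) P)
    (Z : ℕ → Ω → ℕ) (hZ0 : ∀ ω, Z 0 ω = 1)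
    (hZsucc : ∀ n ω, Z (n + 1) ω = ∑ i ∈ Finset.range (Z n ω), ξ n i ω)
    (n : ℕ) (t : ℝ) (φ : ℕ → ℝ≥0∞) :
    ∫⁻ ω, φ (Z n ω) * ENNReal.ofReal (Real.exp (t * Z (n+1) ω)) ∂P
      = ∑' j : ℕ, φ j * psi μ t ^ j * P (Z n ⁻¹' {j}) := by
  have hZF := gwZF ξ hmeas Z hZ0 hZsucc
  have hZmeas : ∀ k, Measurable (Z k) := fun k => (hZF k).mono (Falg_le ξ hmeas k) le_rfl
  have hpt : ∀ ω, φ (Z n ω) * ENNReal.ofReal (Real.exp (t * Z (n+1) ω))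
      = ∑' j : ℕ, Set.indicator (Z n ⁻¹' {j}) (fun _ => φ j) ω
          * ∏ i ∈ Finset.range j, ENNReal.ofReal (Real.exp (t * ξ n i ω)) := by
    intro ω
    have hz : ∀ (j : ℕ), j ≠ Z n ω → Set.indicator (Z n ⁻¹' {j}) (fun _ => φ j) ω
        * ∏ i ∈ Finset.range j, ENNReal.ofReal (Real.exp (t * ξ n i ω)) = 0 := by
      intro j hj
      rw [Set.indicator_of_notMem, zero_mul]
      intro hmem
      have h1 : Z n ω = j := hmem
      exact hj h1.symm
    rw [tsum_eq_single (Z n ω) hz]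
    rw [Set.indicator_of_mem (show ω ∈ Z n ⁻¹' {Z n ω} from rfl)]
    congr 1
    rw [hZsucc n ω, ← ENNReal.ofReal_prod_of_nonneg (fun i _ => Real.exp_nonneg _)]
    congr 1
    rw [← Real.exp_sum]
    congr 1
    push_cast
    rw [Finset.mul_sum]
  calc ∫⁻ ω, φ (Z n ω) * ENNReal.ofReal (Real.exp (t * Z (n+1) ω)) ∂P
      = ∫⁻ ω, ∑' j : ℕ, Set.indicator (Z n ⁻¹' {j}) (fun _ => φ j) ω
          * ∏ i ∈ Finset.range j, ENNReal.ofReal (Real.exp (t * ξ n i ω)) ∂P := by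
        congr 1; funext ω; exact hpt ω
    _ = ∑' j : ℕ, ∫⁻ ω, Set.indicator (Z n ⁻¹' {j}) (fun _ => φ j) ω
          * ∏ i ∈ Finset.range j, ENNReal.ofReal (Real.exp (t * ξ n i ω)) ∂P := by
        refine lintegral_tsum fun j => ?_
        refine Measurable.aemeasurable ?_
        refine Measurable.mul ?_ ?_
        · exact measurable_const.indicator ((hZmeas n) (measurableSet_singleton j))
        · refine Finset.measurable_prod _ fun i _ => ?_
          have hcont : Measurable (fun k : ℕ => ENNReal.ofReal (Real.exp (t * k))) :=
            measurable_from_nat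
          exact hcont.comp (hmeas n i)
    _ = ∑' j : ℕ, φ j * psi μ t ^ j * P (Z n ⁻¹' {j}) := by
        congr 1
        funext j
        rw [gwL1 P μ ξ hmeas hlaw hindep n j t _
          (measurable_const.indicator (hZF n (measurableSet_singleton j)))]
        rw [lintegral_indicator_const ((hZmeas n) (measurableSet_singleton j))]
        ring

lemma exp_quad {x : ℝ} (hx : |x| ≤ 1) : Real.exp x ≤ 1 + x + x ^ 2 := by
  have h := Real.exp_bound hx (by norm_num : 0 < 2)
  simp [Finset.sum_range_succ] at h
  have h2 := abs_le.mp h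
  norm_num at h2
  nlinarith [h2.1, h2.2, sq_nonneg x, sq_abs x]

lemma psi_le (d : ℕ) (m : ℝ) [MeasureTheory.IsProbabilityMeasure μ]
    (hsupp : ∀ k : ℕ, d < k → μ {k} = 0)
    (hmean : ∑' k : ℕ, (k : ℝ) * (μ {k}).toReal = m)
    (t : ℝ) (ht : |t| * d ≤ 1) :
    psi μ t ≤ ENNReal.ofReal (Real.exp (t * m + d * m * t ^ 2)) := by
  classical
  have hvan : ∀ k ∉ Finset.range (d+1),
      ENNReal.ofReal (Real.exp (t * k)) * μ {k} = 0 := by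
    intro k hk
    rw [hsupp k (by simp [Finset.mem_range] at hk; omega), mul_zero]
  have hpsi : psi μ t = ∑ k ∈ Finset.range (d+1),
      ENNReal.ofReal (Real.exp (t * k)) * μ {k} := tsum_eq_sum hvan
  have hterm : ∀ k : ℕ, ENNReal.ofReal (Real.exp (t * k)) * μ {k}
      = ENNReal.ofReal (Real.exp (t * k) * (μ {k}).toReal) := by
    intro k
    rw [ENNReal.ofReal_mul (Real.exp_nonneg _), ENNReal.ofReal_toReal (measure_ne_top μ _)]
  have hpsi2 : psi μ t = ENNReal.ofReal (∑ k ∈ Finset.range (d+1),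
      Real.exp (t * k) * (μ {k}).toReal) := by
    rw [hpsi, ENNReal.ofReal_sum_of_nonneg fun k _ =>
      mul_nonneg (Real.exp_nonneg _) ENNReal.toReal_nonneg]
    exact Finset.sum_congr rfl fun k _ => hterm k
  rw [hpsi2]
  apply ENNReal.ofReal_le_ofReal
  -- real inequality
  have hp1 : ∑ k ∈ Finset.range (d+1), (μ {k}).toReal = 1 := by
    have h0 : ∑' k : ℕ, μ {k} = 1 := by
      have hdis : Pairwise (Function.onFun Disjoint fun k : ℕ => ({k} : Set ℕ)) := by
        intro i j hij
        simpa [Function.onFun] using Set.disjoint_singleton.mpr hij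
      calc ∑' k : ℕ, μ {k} = μ (⋃ k : ℕ, ({k} : Set ℕ)) :=
            (MeasureTheory.measure_iUnion hdis fun k => measurableSet_singleton k).symm
        _ = μ Set.univ := by rw [Set.iUnion_of_singleton]
        _ = 1 := measure_univ
    have h1 : ∑ k ∈ Finset.range (d+1), μ {k} = 1 :=
      (tsum_eq_sum (f := fun k : ℕ => μ {k})
        (fun k hk => hsupp k (by simp [Finset.mem_range] at hk; omega))).symm.trans h0
    have := congrArg ENNReal.toReal h1
    rwa [ENNReal.toReal_sum fun k _ => measure_ne_top μ _, ENNReal.toReal_one] at this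
  have hp2 : ∑ k ∈ Finset.range (d+1), (k : ℝ) * (μ {k}).toReal = m :=
    (tsum_eq_sum (f := fun k : ℕ => (k : ℝ) * (μ {k}).toReal)
      (fun k hk => by simp [hsupp k (by simp [Finset.mem_range] at hk; omega)])).symm.trans
      hmean
  have hb : ∀ k ∈ Finset.range (d+1), Real.exp (t * k) * (μ {k}).toReal
      ≤ (1 + t * k + t ^ 2 * d * k) * (μ {k}).toReal := by
    intro k hk
    have hkd : (k : ℝ) ≤ d := by
      have := Finset.mem_range.1 hk
      exact_mod_cast Nat.lt_succ_iff.1 this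
    have hxk : |t * k| ≤ 1 := by
      rw [abs_mul, abs_of_nonneg (Nat.cast_nonneg k : (0:ℝ) ≤ k)]
      calc |t| * (k : ℝ) ≤ |t| * d := by gcongr
        _ ≤ 1 := ht
    have h1 := exp_quad hxk
    have h2 : (t * k) ^ 2 ≤ t ^ 2 * d * k := by
      have : (t * k) ^ 2 = t ^ 2 * k * k := by ring
      rw [this]
      have hk0 : (0:ℝ) ≤ k := Nat.cast_nonneg k
      nlinarith [sq_nonneg t, mul_le_mul_of_nonneg_left hkd (mul_nonneg (sq_nonneg t) hk0)]
    have h3 : Real.exp (t * k) ≤ 1 + t * k + t ^ 2 * d * k := by linarith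
    exact mul_le_mul_of_nonneg_right h3 ENNReal.toReal_nonneg
  calc ∑ k ∈ Finset.range (d+1), Real.exp (t * k) * (μ {k}).toReal
      ≤ ∑ k ∈ Finset.range (d+1), (1 + t * k + t ^ 2 * d * k) * (μ {k}).toReal :=
        Finset.sum_le_sum hb
    _ = ∑ k ∈ Finset.range (d+1), ((μ {k}).toReal + t * ((k : ℝ) * (μ {k}).toReal)
          + t ^ 2 * d * ((k : ℝ) * (μ {k}).toReal)) := by
        exact Finset.sum_congr rfl fun k _ => by ring
    _ = 1 + t * m + t ^ 2 * d * m := by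
        rw [Finset.sum_add_distrib, Finset.sum_add_distrib, ← Finset.mul_sum, ← Finset.mul_sum,
          hp1, hp2]
    _ ≤ Real.exp (t * m + d * m * t ^ 2) := by
        have h4 := Real.add_one_le_exp (t * m + d * m * t ^ 2)
        linarith

lemma gw_key (hmeas : ∀ n i, Measurable (ξ n i))
    (hlaw : ∀ n i, MeasureTheory.Measure.map (ξ n i) P = μ)
    (hindep : ProbabilityTheory.iIndepFun
      (fun p : ℕ × ℕ => ξ p.1 p.2) P)
    (Z : ℕ → Ω → ℕ) (hZ0 : ∀ ω, Z 0 ω = 1)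
    (hZsucc : ∀ n ω, Z (n + 1) ω = ∑ i ∈ Finset.range (Z n ω), ξ n i ω)
    (d : ℕ) (m : ℝ) [MeasureTheory.IsProbabilityMeasure μ]
    (hsupp : ∀ k : ℕ, d < k → μ {k} = 0)
    (hmean : ∑' k : ℕ, (k : ℝ) * (μ {k}).toReal = m)
    (n : ℕ) (t b : ℝ) (ht : |t| * d ≤ 1) :
    ∫⁻ ω, ENNReal.ofReal (Real.exp (b * Z n ω))
        * ENNReal.ofReal (Real.exp (t * Z (n+1) ω)) ∂P
      ≤ ∫⁻ ω, ENNReal.ofReal (Real.exp ((b + (t * m + d * m * t ^ 2)) * Z n ω)) ∂P := by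
  have hZn : Measurable (Z n) :=
    (gwZF ξ hmeas Z hZ0 hZsucc n).mono (Falg_le ξ hmeas n) le_rfl
  calc ∫⁻ ω, ENNReal.ofReal (Real.exp (b * Z n ω))
        * ENNReal.ofReal (Real.exp (t * Z (n+1) ω)) ∂P
      = ∑' j : ℕ, (fun j : ℕ => ENNReal.ofReal (Real.exp (b * j))) j * psi μ t ^ j
          * P (Z n ⁻¹' {j}) := by
        exact gwL2 P μ ξ hmeas hlaw hindep Z hZ0 hZsucc n t
          (fun j : ℕ => ENNReal.ofReal (Real.exp (b * j)))
    _ ≤ ∑' j : ℕ, (fun j : ℕ =>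
          ENNReal.ofReal (Real.exp ((b + (t * m + d * m * t ^ 2)) * j))) j
          * P (Z n ⁻¹' {j}) := by
        refine ENNReal.tsum_le_tsum fun j => ?_
        refine mul_le_mul_left ?_ _
        calc ENNReal.ofReal (Real.exp (b * j)) * psi μ t ^ j
            ≤ ENNReal.ofReal (Real.exp (b * j))
              * ENNReal.ofReal (Real.exp (t * m + d * m * t ^ 2)) ^ j := by
              gcongr
              exact psi_le μ d m hsupp hmean t ht
          _ = ENNReal.ofReal (Real.exp ((b + (t * m + d * m * t ^ 2)) * j)) := by
              rw [← ENNReal.ofReal_pow (Real.exp_nonneg _), ← Real.exp_nat_mul,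
                ← ENNReal.ofReal_mul (Real.exp_nonneg _), ← Real.exp_add]
              congr 1
              ring
    _ = ∫⁻ ω, ENNReal.ofReal (Real.exp ((b + (t * m + d * m * t ^ 2)) * Z n ω)) ∂P :=
        (gw_decomp P (Z n) hZn _).symm

end GWaux
set_option maxHeartbeats 1000000 in
/-- For every real θ with 0 ≤ θ < ((log 3 − 1)/40)·(m−1)/(m·d), the a.s. limit
W_∞ = limsup W_n has a finite exponential moment: E[exp(θ·W_∞)] < ∞. -/
theorem gw_Winf_exponential_moment
    {Ω : Type*} [MeasurableSpace Ω] (P : MeasureTheory.Measure Ω)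
    [MeasureTheory.IsProbabilityMeasure P]
    (d : ℕ) (hd : 2 ≤ d) (m : ℝ) (hm : 1 < m)
    (μ : MeasureTheory.Measure ℕ) [MeasureTheory.IsProbabilityMeasure μ]
    (hsupp : ∀ k : ℕ, d < k → μ {k} = 0)
    (hmean : ∑' k : ℕ, (k : ℝ) * (μ {k}).toReal = m)
    (ξ : ℕ → ℕ → Ω → ℕ)
    (hmeas : ∀ n i, Measurable (ξ n i))
    (hlaw : ∀ n i, MeasureTheory.Measure.map (ξ n i) P = μ)
    (hindep : ProbabilityTheory.iIndepFun
      (fun p : ℕ × ℕ => ξ p.1 p.2) P)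
    (Z : ℕ → Ω → ℕ) (hZ0 : ∀ ω, Z 0 ω = 1)
    (hZsucc : ∀ n ω, Z (n + 1) ω = ∑ i ∈ Finset.range (Z n ω), ξ n i ω)
    (W : ℕ → Ω → ℝ) (hW : ∀ n ω, W n ω = (Z n ω : ℝ) / m ^ n)
    (Winf : Ω → ℝ)
    (hWinf : ∀ ω, Winf ω = Filter.limsup (fun n => W n ω) Filter.atTop)
    (θ : ℝ) (hθ0 : 0 ≤ θ)
    (hθ : θ < (Real.log 3 - 1) / 40 * (m - 1) / (m * d)) :
    MeasureTheory.Integrable (fun ω => Real.exp (θ * Winf ω)) P := by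
  classical
  rcases eq_or_lt_of_le hθ0 with heq | hθpos
  · subst heq
    simpa using MeasureTheory.integrable_const (μ := P) (1 : ℝ)
  -- basic positivity facts
  have hm0 : (0:ℝ) < m := lt_trans one_pos hm
  have hd0 : (0:ℝ) < d := by
    have : (0:ℕ) < d := by omega
    exact_mod_cast this
  have hdm : (0:ℝ) < d * m := mul_pos hd0 hm0
  -- numeric consequences of hθ
  have hlog3 : Real.log 3 - 1 ≤ 1 := by
    have := Real.log_le_sub_one_of_pos (by norm_num : (0:ℝ) < 3)
    linarith
  have hkey : θ * (m * d) * 40 ≤ m - 1 := by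
    have hmd : (0:ℝ) < m * d := mul_pos hm0 hd0
    have h1 : θ * (m * d) < (Real.log 3 - 1) / 40 * (m - 1) :=
      (lt_div_iff₀ hmd).1 hθ
    nlinarith [mul_pos hθpos hmd]
  have hA : 4 * (d : ℝ) * θ ≤ m - 1 := by nlinarith [mul_pos hθpos hdm]
  have hθd : θ * d ≤ 1 / 40 := by
    have h40 : 40 * (θ * d) * m ≤ m - 1 := by nlinarith
    nlinarith [mul_pos hθpos hd0]
  have h2θd : 2 * θ * d ≤ 1 := by nlinarith
  -- measurability of Z and W
  have hZF := GWaux.gwZF ξ hmeas Z hZ0 hZsucc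
  have hZmeas : ∀ n, Measurable (Z n) :=
    fun n => (hZF n).mono (GWaux.Falg_le ξ hmeas n) le_rfl
  have hWmeas : ∀ n, Measurable (W n) := by
    intro n
    have : W n = fun ω => (Z n ω : ℝ) / m ^ n := funext (hW n)
    rw [this]
    exact (measurable_from_nat.comp (hZmeas n)).div_const _
  have hGmeas : ∀ (a : ℝ) (k : ℕ),
      Measurable (fun ω => ENNReal.ofReal (Real.exp (a * Z k ω))) := fun a k =>
    (measurable_from_nat (f := fun j : ℕ => ENNReal.ofReal (Real.exp (a * j)))).comp (hZmeas k)
  -- the weight sequence u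
  set x : ℝ := m⁻¹ with hx_def
  have hx0 : 0 < x := inv_pos.2 hm0
  have hmx : m * x = 1 := mul_inv_cancel₀ (ne_of_gt hm0)
  have hx1 : x ≤ 1 := by nlinarith
  set u : ℕ → ℝ := fun n => θ * (1 + x ^ n) * x ^ n with hu_def
  have hxpow : ∀ n : ℕ, 0 < x ^ n := fun n => pow_pos hx0 n
  have hxpow1 : ∀ n : ℕ, x ^ n ≤ 1 := fun n => pow_le_one₀ hx0.le hx1
  have hu_beta : ∀ n, u n = θ * (1 + x ^ n) * x ^ n := fun n => rfl
  have hu_low : ∀ n, θ * x ^ n ≤ u n := by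
    intro n
    rw [hu_beta]
    nlinarith [mul_nonneg (mul_nonneg hθpos.le (hxpow n).le) (hxpow n).le]
  have hu_up : ∀ n, u n ≤ 2 * θ := by
    intro n
    rw [hu_beta]
    have h2 : x ^ n + x ^ n * x ^ n ≤ 2 := by nlinarith [hxpow n, hxpow1 n]
    nlinarith [mul_le_mul_of_nonneg_left h2 hθpos.le]
  have hu_nonneg : ∀ n, 0 ≤ u n :=
    fun n => le_trans (by positivity) (hu_low n)
  have hu_absd : ∀ n, |u n| * d ≤ 1 := by
    intro n
    rw [abs_of_nonneg (hu_nonneg n)]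
    nlinarith [hu_up n]
  have hu_rec : ∀ n, u (n+1) * m + d * m * u (n+1) ^ 2 ≤ u n := by
    intro n
    rw [hu_beta, hu_beta, pow_succ' x n]
    set X := x ^ n with hX_def
    have hX : 0 < X := hxpow n
    have hX1 : X ≤ 1 := hxpow1 n
    have hY0 : 0 < x * X := mul_pos hx0 hX
    have hY1 : x * X ≤ 1 := by nlinarith
    have h4 : 4 * (d:ℝ) * θ ^ 2 ≤ θ * (m - 1) := by nlinarith
    have h9 : θ * (m * x) = θ := by rw [hmx, mul_one]
    have h6 : 4 * (d:ℝ) * θ ^ 2 * x ≤ θ * (1 - x) := by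
      nlinarith [mul_le_mul_of_nonneg_left h4 hx0.le, h9]
    have hYsq : (1 + x * X) ^ 2 ≤ 4 := by nlinarith
    have key1 : (d:ℝ) * m * (θ * (1 + x * X) * (x * X)) ^ 2 ≤ θ * (1 - x) * X ^ 2 := by
      calc (d:ℝ) * m * (θ * (1 + x * X) * (x * X)) ^ 2
          = (d:ℝ) * m * θ ^ 2 * (1 + x * X) ^ 2 * (x * X) ^ 2 := by ring
        _ ≤ (d:ℝ) * m * θ ^ 2 * 4 * (x * X) ^ 2 :=
            mul_le_mul_of_nonneg_right
              (mul_le_mul_of_nonneg_left hYsq (by positivity)) (sq_nonneg (x * X))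
        _ = 4 * (d:ℝ) * θ ^ 2 * x * (m * x) * X ^ 2 := by ring
        _ = 4 * (d:ℝ) * θ ^ 2 * x * X ^ 2 := by rw [hmx]; ring
        _ ≤ θ * (1 - x) * X ^ 2 := mul_le_mul_of_nonneg_right h6 (sq_nonneg X)
    have heq : θ * (1 + x * X) * (x * X) * m + θ * (1 - x) * X ^ 2
        = θ * (1 + X) * X := by linear_combination (θ * X + θ * x * X ^ 2) * hmx
    linarith [key1, heq]
  -- monotonicity in the exponent
  have hmono : ∀ (a b : ℝ) (n : ℕ), a ≤ b →
      ∫⁻ ω, ENNReal.ofReal (Real.exp (a * Z n ω)) ∂P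
        ≤ ∫⁻ ω, ENNReal.ofReal (Real.exp (b * Z n ω)) ∂P := by
    intro a b n hab
    refine MeasureTheory.lintegral_mono fun ω => ?_
    exact ENNReal.ofReal_le_ofReal (Real.exp_le_exp.2
      (mul_le_mul_of_nonneg_right hab (Nat.cast_nonneg _)))
  -- uniform exponential bound
  have hub : ∀ n, ∫⁻ ω, ENNReal.ofReal (Real.exp (u n * Z n ω)) ∂P
      ≤ ENNReal.ofReal (Real.exp (2 * θ)) := by
    intro n
    induction n with
    | zero =>
      have hu0 : u 0 = 2 * θ := by rw [hu_beta]; ring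
      have hpt : ∀ ω, ENNReal.ofReal (Real.exp (u 0 * Z 0 ω))
          = ENNReal.ofReal (Real.exp (2 * θ)) := by
        intro ω
        rw [hZ0 ω, Nat.cast_one, mul_one, hu0]
      refine le_of_eq ?_
      calc ∫⁻ ω, ENNReal.ofReal (Real.exp (u 0 * Z 0 ω)) ∂P
          = ∫⁻ _, ENNReal.ofReal (Real.exp (2 * θ)) ∂P := by
            congr 1; funext ω; exact hpt ω
        _ = ENNReal.ofReal (Real.exp (2 * θ)) := by
            rw [MeasureTheory.lintegral_const, measure_univ, mul_one]
    | succ n ih =>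
      have h1 : ∫⁻ ω, ENNReal.ofReal (Real.exp (u (n+1) * Z (n+1) ω)) ∂P
          = ∫⁻ ω, ENNReal.ofReal (Real.exp (0 * Z n ω))
              * ENNReal.ofReal (Real.exp (u (n+1) * Z (n+1) ω)) ∂P := by
        simp [Real.exp_zero]
      rw [h1]
      calc ∫⁻ ω, ENNReal.ofReal (Real.exp (0 * Z n ω))
              * ENNReal.ofReal (Real.exp (u (n+1) * Z (n+1) ω)) ∂P
          ≤ ∫⁻ ω, ENNReal.ofReal (Real.exp
              ((0 + (u (n+1) * m + d * m * u (n+1) ^ 2)) * Z n ω)) ∂P :=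
            GWaux.gw_key P μ ξ hmeas hlaw hindep Z hZ0 hZsucc d m hsupp hmean n
              (u (n+1)) 0 (hu_absd (n+1))
        _ ≤ ∫⁻ ω, ENNReal.ofReal (Real.exp (u n * Z n ω)) ∂P := by
            refine hmono _ _ n ?_
            have := hu_rec n
            linarith
        _ ≤ ENNReal.ofReal (Real.exp (2 * θ)) := ih
  -- bound for exp (θ W n)
  have hWb : ∀ n, ∫⁻ ω, ENNReal.ofReal (Real.exp (θ * W n ω)) ∂P
      ≤ ENNReal.ofReal (Real.exp (2 * θ)) := by
    intro n
    have hpt : ∀ ω, θ * W n ω = (θ * x ^ n) * (Z n ω : ℝ) := by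
      intro ω
      rw [hW n ω, hx_def, div_eq_mul_inv, ← inv_pow]
      ring
    calc ∫⁻ ω, ENNReal.ofReal (Real.exp (θ * W n ω)) ∂P
        = ∫⁻ ω, ENNReal.ofReal (Real.exp ((θ * x ^ n) * Z n ω)) ∂P := by
          congr 1; funext ω; rw [hpt ω]
      _ ≤ ∫⁻ ω, ENNReal.ofReal (Real.exp (u n * Z n ω)) ∂P :=
          hmono _ _ n (hu_low n)
      _ ≤ ENNReal.ofReal (Real.exp (2 * θ)) := hub n
  -- geometric quantities
  set q : ℝ := Real.sqrt (Real.sqrt m) with hq_def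
  have hq1 : 1 < q := by
    have h1 : (1:ℝ) < Real.sqrt m := by
      rw [show (1:ℝ) = Real.sqrt 1 from (Real.sqrt_one).symm]
      exact Real.sqrt_lt_sqrt (by norm_num) hm
    rw [hq_def, show (1:ℝ) = Real.sqrt 1 from (Real.sqrt_one).symm]
    exact Real.sqrt_lt_sqrt (by norm_num) h1
  have hq0 : 0 < q := lt_trans one_pos hq1
  have hq4 : q ^ 4 = m := by
    rw [hq_def, show 4 = 2*2 from rfl, pow_mul, Real.sq_sqrt (Real.sqrt_nonneg m),
      Real.sq_sqrt hm0.le]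
  set s0 : ℝ := Real.sqrt (θ / (d * m)) with hs0_def
  have hs0pos : 0 < s0 := Real.sqrt_pos.2 (by positivity)
  have hs0sq : s0 ^ 2 = θ / (d * m) := Real.sq_sqrt (by positivity)
  have hs0d : s0 * d ≤ 1 := by
    have h1 : (s0 * d) ^ 2 = θ * d / m := by
      rw [mul_pow, hs0sq]
      field_simp
    have h2 : θ * d / m ≤ 1 := by
      rw [div_le_one hm0]
      nlinarith
    nlinarith [mul_nonneg hs0pos.le hd0.le]
  set s : ℕ → ℝ := fun n => s0 / q ^ (2 * n) with hs_def
  have hs_beta : ∀ n, s n = s0 / q ^ (2 * n) := fun _ => rfl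
  set eps : ℕ → ℝ := fun n => (q⁻¹) ^ n with heps_def
  have heps_beta : ∀ n, eps n = (q⁻¹) ^ n := fun _ => rfl
  have hqpow_pos : ∀ k : ℕ, 0 < q ^ k := fun k => pow_pos hq0 k
  have hqpow_ge1 : ∀ k : ℕ, 1 ≤ q ^ k := fun k => one_le_pow₀ hq1.le
  have hs_pos : ∀ n, 0 < s n := fun n => div_pos hs0pos (hqpow_pos _)
  have hs_le : ∀ n, s n ≤ s0 := by
    intro n
    rw [hs_beta]
    exact div_le_self hs0pos.le (hqpow_ge1 _)
  have hsd : ∀ n, |s n| * d ≤ 1 := by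
    intro n
    rw [abs_of_pos (hs_pos n)]
    calc s n * d ≤ s0 * d := by gcongr; exact (hs_le n)
      _ ≤ 1 := hs0d
  have hcs : ∀ n, (d:ℝ) * m * s n ^ 2 = θ * x ^ n := by
    intro n
    have hq2n : (q ^ (2*n)) ^ 2 = m ^ n := by
      rw [← pow_mul, show 2*n*2 = 4*n from by ring, pow_mul, hq4]
    rw [hs_beta]
    rw [div_pow, hs0sq, hq2n, hx_def, inv_pow]
    field_simp
  have hm_pow : ∀ k : ℕ, m ^ k = q ^ (4*k) := by
    intro k
    rw [← hq4, ← pow_mul]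
  have hxe : ∀ n, s n * eps n * m ^ (n+1) = s0 * m * q ^ n := by
    intro n
    rw [hs_beta, heps_beta, hm_pow (n+1), inv_pow, ← hq4]
    have hsplit4 : q ^ (4*(n+1)) = q ^ (2*n) * (q ^ n * (q ^ 4 * q ^ n)) := by
      rw [← pow_add, ← pow_add, ← pow_add]
      congr 1
      ring
    rw [hsplit4]
    field_simp
  -- Markov-type bound
  have hmarkov : ∀ (n : ℕ) (t b : ℝ), |t| * d ≤ 1 → b + (t * m + d * m * t ^ 2) ≤ u n →
      ∀ E : Set Ω, (∀ ω ∈ E, s0 * m * q ^ n ≤ b * (Z n ω : ℝ) + t * (Z (n+1) ω : ℝ)) →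
      P E ≤ ENNReal.ofReal (Real.exp (-(s0 * m * q ^ n)))
        * ENNReal.ofReal (Real.exp (2 * θ)) := by
    intro n t b htd hle E hE
    have hg : AEMeasurable (fun ω => ENNReal.ofReal (Real.exp (b * Z n ω))
        * ENNReal.ofReal (Real.exp (t * Z (n+1) ω))) P :=
      ((hGmeas b n).mul (hGmeas t (n+1))).aemeasurable
    have hsub : E ⊆ {ω | ENNReal.ofReal (Real.exp (s0 * m * q ^ n))
        ≤ ENNReal.ofReal (Real.exp (b * Z n ω))
          * ENNReal.ofReal (Real.exp (t * Z (n+1) ω))} := by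
      intro ω hω
      have h2 : Real.exp (s0 * m * q ^ n)
          ≤ Real.exp (b * (Z n ω : ℝ) + t * (Z (n+1) ω : ℝ)) :=
        Real.exp_le_exp.2 (hE ω hω)
      show ENNReal.ofReal (Real.exp (s0 * m * q ^ n)) ≤ _
      calc ENNReal.ofReal (Real.exp (s0 * m * q ^ n))
          ≤ ENNReal.ofReal (Real.exp (b * (Z n ω : ℝ) + t * (Z (n+1) ω : ℝ))) :=
            ENNReal.ofReal_le_ofReal h2
        _ = ENNReal.ofReal (Real.exp (b * Z n ω)) * ENNReal.ofReal (Real.exp (t * Z (n+1) ω)) := by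
            rw [Real.exp_add, ENNReal.ofReal_mul (Real.exp_nonneg _)]
    have hmark := MeasureTheory.mul_meas_ge_le_lintegral₀ (μ := P) hg
      (ENNReal.ofReal (Real.exp (s0 * m * q ^ n)))
    have hchain : ∫⁻ ω, ENNReal.ofReal (Real.exp (b * Z n ω))
        * ENNReal.ofReal (Real.exp (t * Z (n+1) ω)) ∂P
        ≤ ENNReal.ofReal (Real.exp (2 * θ)) := by
      calc ∫⁻ ω, ENNReal.ofReal (Real.exp (b * Z n ω))
            * ENNReal.ofReal (Real.exp (t * Z (n+1) ω)) ∂P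
          ≤ ∫⁻ ω, ENNReal.ofReal (Real.exp ((b + (t * m + d * m * t ^ 2)) * Z n ω)) ∂P :=
            GWaux.gw_key P μ ξ hmeas hlaw hindep Z hZ0 hZsucc d m hsupp hmean n t b htd
        _ ≤ ∫⁻ ω, ENNReal.ofReal (Real.exp (u n * Z n ω)) ∂P := hmono _ _ n hle
        _ ≤ ENNReal.ofReal (Real.exp (2 * θ)) := hub n
    have hEP : ENNReal.ofReal (Real.exp (s0 * m * q ^ n)) * P E
        ≤ ENNReal.ofReal (Real.exp (2 * θ)) :=
      le_trans (mul_le_mul_right (measure_mono hsub) _) (le_trans hmark hchain)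
    calc P E = ENNReal.ofReal (Real.exp (-(s0 * m * q ^ n)))
          * (ENNReal.ofReal (Real.exp (s0 * m * q ^ n)) * P E) := by
          rw [← mul_assoc, ← ENNReal.ofReal_mul (Real.exp_nonneg _), ← Real.exp_add]
          simp
      _ ≤ ENNReal.ofReal (Real.exp (-(s0 * m * q ^ n)))
          * ENNReal.ofReal (Real.exp (2 * θ)) := mul_le_mul_right hEP _
  -- upper and lower events
  have hplus : ∀ n, P {ω | eps n ≤ W (n+1) ω - W n ω}
      ≤ ENNReal.ofReal (Real.exp (-(s0 * m * q ^ n)))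
        * ENNReal.ofReal (Real.exp (2 * θ)) := by
    intro n
    refine hmarkov n (s n) (-(s n * m)) (hsd n) ?_ _ ?_
    · have h1 := hcs n
      have h2 := hu_low n
      linarith
    · intro ω hω
      have hdiff : -(s n * m) * (Z n ω : ℝ) + s n * (Z (n+1) ω : ℝ)
          = s n * m ^ (n+1) * (W (n+1) ω - W n ω) := by
        rw [hW (n+1) ω, hW n ω]
        field_simp
        ring
      rw [hdiff]
      calc s0 * m * q ^ n = s n * eps n * m ^ (n+1) := (hxe n).symm
        _ = s n * m ^ (n+1) * eps n := by ring
        _ ≤ s n * m ^ (n+1) * (W (n+1) ω - W n ω) :=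
            mul_le_mul_of_nonneg_left hω (mul_pos (hs_pos n) (pow_pos hm0 (n+1))).le
  have hminus : ∀ n, P {ω | eps n ≤ W n ω - W (n+1) ω}
      ≤ ENNReal.ofReal (Real.exp (-(s0 * m * q ^ n)))
        * ENNReal.ofReal (Real.exp (2 * θ)) := by
    intro n
    refine hmarkov n (-(s n)) (s n * m) (by rw [abs_neg]; exact hsd n) ?_ _ ?_
    · have h1 := hcs n
      have h2 := hu_low n
      have h3 : (-(s n)) ^ 2 = s n ^ 2 := by ring
      rw [h3]
      linarith
    · intro ω hω
      have hdiff : s n * m * (Z n ω : ℝ) + (-(s n)) * (Z (n+1) ω : ℝ)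
          = s n * m ^ (n+1) * (W n ω - W (n+1) ω) := by
        rw [hW (n+1) ω, hW n ω]
        field_simp
        ring
      rw [hdiff]
      calc s0 * m * q ^ n = s n * eps n * m ^ (n+1) := (hxe n).symm
        _ = s n * m ^ (n+1) * eps n := by ring
        _ ≤ s n * m ^ (n+1) * (W n ω - W (n+1) ω) :=
            mul_le_mul_of_nonneg_left hω (mul_pos (hs_pos n) (pow_pos hm0 (n+1))).le
  have hAbound : ∀ n, P {ω | eps n ≤ |W (n+1) ω - W n ω|}
      ≤ 2 * (ENNReal.ofReal (Real.exp (-(s0 * m * q ^ n)))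
        * ENNReal.ofReal (Real.exp (2 * θ))) := by
    intro n
    have hsplit : {ω | eps n ≤ |W (n+1) ω - W n ω|}
        ⊆ {ω | eps n ≤ W (n+1) ω - W n ω} ∪ {ω | eps n ≤ W n ω - W (n+1) ω} := by
      intro ω hω
      have hω' : eps n ≤ |W (n+1) ω - W n ω| := hω
      rcases le_abs.1 hω' with h | h
      · exact Or.inl h
      · right
        show eps n ≤ W n ω - W (n+1) ω
        rw [neg_sub] at h
        exact h
    calc P {ω | eps n ≤ |W (n+1) ω - W n ω|}
        ≤ P ({ω | eps n ≤ W (n+1) ω - W n ω} ∪ {ω | eps n ≤ W n ω - W (n+1) ω}) :=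
          measure_mono hsplit
      _ ≤ P {ω | eps n ≤ W (n+1) ω - W n ω} + P {ω | eps n ≤ W n ω - W (n+1) ω} :=
          measure_union_le _ _
      _ ≤ _ := by
          rw [two_mul]
          exact add_le_add (hplus n) (hminus n)
  -- summability
  have hρ1 : Real.exp (-(s0 * m * (q - 1))) < 1 := by
    rw [Real.exp_lt_one_iff]
    nlinarith [mul_pos (mul_pos hs0pos hm0) (sub_pos.2 hq1)]
  have hbnd : ∀ n : ℕ, ENNReal.ofReal (Real.exp (-(s0 * m * q ^ n)))
      ≤ ENNReal.ofReal (Real.exp (-(s0 * m * (q - 1)))) ^ n := by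
    intro n
    have hqn : (n:ℝ) * (q - 1) ≤ q ^ n := by
      have hb := one_add_mul_le_pow (a := q - 1) (by nlinarith) n
      have hb2 : 1 + (n:ℝ) * (q - 1) ≤ q ^ n := by
        calc 1 + (n:ℝ) * (q - 1) ≤ (1 + (q - 1)) ^ n := hb
          _ = q ^ n := by ring_nf
      linarith
    have h3 : s0 * m * ((n:ℝ) * (q - 1)) ≤ s0 * m * q ^ n :=
      mul_le_mul_of_nonneg_left hqn (by positivity)
    have h2 : -(s0 * m * q ^ n) ≤ (n:ℝ) * (-(s0 * m * (q - 1))) := by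
      have h4 : (n:ℝ) * (-(s0 * m * (q - 1))) = -(s0 * m * ((n:ℝ) * (q - 1))) := by ring
      rw [h4]
      linarith
    calc ENNReal.ofReal (Real.exp (-(s0 * m * q ^ n)))
        ≤ ENNReal.ofReal (Real.exp ((n:ℝ) * (-(s0 * m * (q - 1))))) :=
          ENNReal.ofReal_le_ofReal (Real.exp_le_exp.2 h2)
      _ = ENNReal.ofReal (Real.exp (-(s0 * m * (q - 1))) ^ n) := by
          rw [← Real.exp_nat_mul]
      _ = ENNReal.ofReal (Real.exp (-(s0 * m * (q - 1)))) ^ n :=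
          ENNReal.ofReal_pow (Real.exp_nonneg _) n
  have hsum : (∑' n : ℕ, P {ω | eps n ≤ |W (n+1) ω - W n ω|}) ≠ ⊤ := by
    have htot : (∑' n : ℕ, P {ω | eps n ≤ |W (n+1) ω - W n ω|})
        ≤ 2 * ENNReal.ofReal (Real.exp (2 * θ))
          * (1 - ENNReal.ofReal (Real.exp (-(s0 * m * (q - 1)))))⁻¹ := by
      calc (∑' n : ℕ, P {ω | eps n ≤ |W (n+1) ω - W n ω|})
          ≤ ∑' n : ℕ, 2 * ENNReal.ofReal (Real.exp (2 * θ))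
            * ENNReal.ofReal (Real.exp (-(s0 * m * (q - 1)))) ^ n := by
            refine ENNReal.tsum_le_tsum fun n => ?_
            calc P {ω | eps n ≤ |W (n+1) ω - W n ω|}
                ≤ 2 * (ENNReal.ofReal (Real.exp (-(s0 * m * q ^ n)))
                  * ENNReal.ofReal (Real.exp (2 * θ))) := hAbound n
              _ ≤ 2 * (ENNReal.ofReal (Real.exp (-(s0 * m * (q - 1)))) ^ n
                  * ENNReal.ofReal (Real.exp (2 * θ))) := by
                  gcongr
                  exact hbnd n
              _ = 2 * ENNReal.ofReal (Real.exp (2 * θ))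
                  * ENNReal.ofReal (Real.exp (-(s0 * m * (q - 1)))) ^ n := by ring
        _ = 2 * ENNReal.ofReal (Real.exp (2 * θ))
            * ∑' n : ℕ, ENNReal.ofReal (Real.exp (-(s0 * m * (q - 1)))) ^ n :=
            ENNReal.tsum_mul_left
        _ = 2 * ENNReal.ofReal (Real.exp (2 * θ))
            * (1 - ENNReal.ofReal (Real.exp (-(s0 * m * (q - 1)))))⁻¹ := by
            rw [ENNReal.tsum_geometric]
    refine ne_top_of_le_ne_top ?_ htot
    have hlt1 : ENNReal.ofReal (Real.exp (-(s0 * m * (q - 1)))) < 1 :=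
      ENNReal.ofReal_lt_one.2 hρ1
    refine ENNReal.mul_ne_top (ENNReal.mul_ne_top (by norm_num) ENNReal.ofReal_ne_top) ?_
    exact ENNReal.inv_ne_top.2 (tsub_pos_of_lt hlt1).ne'
  -- a.s. convergence
  have hfin := MeasureTheory.ae_finite_setOf_mem
    (s := fun n => {ω | eps n ≤ |W (n+1) ω - W n ω|}) hsum
  have hqinv0 : 0 ≤ q⁻¹ := by positivity
  have hqinv1 : q⁻¹ < 1 := inv_lt_one_of_one_lt₀ hq1
  have hconv : ∀ᵐ ω ∂P, Filter.Tendsto (fun n => W n ω) Filter.atTop (nhds (Winf ω)) := by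
    filter_upwards [hfin] with ω hω
    obtain ⟨N, hN⟩ := hω.bddAbove
    have hgood : ∀ k : ℕ, |W (N + 1 + k + 1) ω - W (N + 1 + k) ω| ≤ eps (N + 1 + k) := by
      intro k
      by_contra hcon
      push_neg at hcon
      have hmem : (N + 1 + k) ∈ {n : ℕ | ω ∈ {ω' | eps n ≤ |W (n+1) ω' - W n ω'|}} :=
        le_of_lt hcon
      have := hN hmem
      omega
    have hcauchy : CauchySeq (fun k => W (N + 1 + k) ω) := by
      refine cauchySeq_of_dist_le_of_summable (fun k => eps (N + 1 + k)) ?_ ?_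
      · intro k
        rw [Real.dist_eq, abs_sub_comm]
        exact hgood k
      · have heq1 : (fun k => eps (N + 1 + k)) = fun k => (q⁻¹) ^ (N + 1) * (q⁻¹) ^ k := by
          funext k
          rw [heps_beta, ← pow_add]
        rw [heq1]
        exact (summable_geometric_of_lt_one hqinv0 hqinv1).mul_left _
    obtain ⟨L, hL⟩ := cauchySeq_tendsto_of_complete hcauchy
    have hLW : Filter.Tendsto (fun n => W n ω) Filter.atTop (nhds L) := by
      have heq2 : (fun k => W (N + 1 + k) ω) = fun k => W (k + (N + 1)) ω := by
        funext k
        congr 1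
        omega
      rw [heq2] at hL
      exact (Filter.tendsto_add_atTop_iff_nat (N+1)).1 hL
    have hWL : Winf ω = L := by
      rw [hWinf ω]
      exact hLW.limsup_eq
    rw [hWL]
    exact hLW
  -- conclusion
  have hWinf_aemeas : AEMeasurable Winf P :=
    aemeasurable_of_tendsto_metrizable_ae Filter.atTop
      (fun n => (hWmeas n).aemeasurable) hconv
  constructor
  · have hcont : Measurable fun y : ℝ => Real.exp (θ * y) :=
      Real.measurable_exp.comp (measurable_id.const_mul θ)
    exact (hcont.comp_aemeasurable hWinf_aemeas).aestronglyMeasurable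
  · rw [MeasureTheory.hasFiniteIntegral_iff_ofReal
      (Filter.Eventually.of_forall fun ω => Real.exp_nonneg _)]
    have hptlim : ∀ᵐ ω ∂P, ENNReal.ofReal (Real.exp (θ * Winf ω))
        = Filter.liminf (fun n => ENNReal.ofReal (Real.exp (θ * W n ω))) Filter.atTop := by
      filter_upwards [hconv] with ω hω
      have h1 : Filter.Tendsto (fun n => ENNReal.ofReal (Real.exp (θ * W n ω)))
          Filter.atTop (nhds (ENNReal.ofReal (Real.exp (θ * Winf ω)))) :=
        (ENNReal.continuous_ofReal.tendsto _).comp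
          ((Real.continuous_exp.tendsto _).comp (hω.const_mul θ))
      exact h1.liminf_eq.symm
    calc ∫⁻ ω, ENNReal.ofReal (Real.exp (θ * Winf ω)) ∂P
        = ∫⁻ ω, Filter.liminf (fun n => ENNReal.ofReal (Real.exp (θ * W n ω)))
            Filter.atTop ∂P := MeasureTheory.lintegral_congr_ae hptlim
      _ ≤ Filter.liminf (fun n => ∫⁻ ω, ENNReal.ofReal (Real.exp (θ * W n ω)) ∂P)
            Filter.atTop :=
          MeasureTheory.lintegral_liminf_le fun n =>
            ENNReal.measurable_ofReal.comp (Real.measurable_exp.comp ((hWmeas n).const_mul θ))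
      _ ≤ ENNReal.ofReal (Real.exp (2 * θ)) := by
          have h2 := Filter.liminf_le_liminf (f := Filter.atTop)
            (u := fun n => ∫⁻ ω, ENNReal.ofReal (Real.exp (θ * W n ω)) ∂P)
            (v := fun _ => ENNReal.ofReal (Real.exp (2 * θ)))
            (Filter.Eventually.of_forall hWb)
          rwa [Filter.liminf_const] at h2
      _ < ⊤ := ENNReal.ofReal_lt_top
end

section
/- The martingale (W_n)_{n≥0} converges almost surely and in L² to a nonnegative random variable W_∞ with E[W_∞] = 1. -/
open MeasureTheory ProbabilityTheory Filter Topology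
open scoped ENNReal NNReal
set_option linter.unusedSectionVars false
set_option linter.unusedVariables false

namespace GWaux

variable {Ω : Type*} [m0 : MeasurableSpace Ω] {P : Measure Ω} [IsProbabilityMeasure P]
variable {d : ℕ} {ξ : ℕ → ℕ → Ω → ℕ}

/-- truncated Galton-Watson process -/
def gwZ (d : ℕ) (ξ : ℕ → ℕ → Ω → ℕ) : ℕ → Ω → ℕ
  | 0 => fun _ => 1
  | n+1 => fun ω => ∑ i ∈ Finset.range (gwZ d ξ n ω), min (ξ n i ω) d

/-- σ-algebra of the first n generations -/
def gwSig (ξ : ℕ → ℕ → Ω → ℕ) (n : ℕ) : MeasurableSpace Ω :=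
  ⨆ (p : ℕ × ℕ) (_ : p.1 < n), MeasurableSpace.comap (ξ p.1 p.2) inferInstance

lemma gwZ_le_pow (hd : 1 ≤ d) (n : ℕ) (ω : Ω) : gwZ d ξ n ω ≤ d ^ n := by
  induction n with
  | zero => simp [gwZ]
  | succ n ih =>
    calc gwZ d ξ (n+1) ω ≤ ∑ _i ∈ Finset.range (gwZ d ξ n ω), d :=
          Finset.sum_le_sum fun i _ => min_le_right _ _
      _ = gwZ d ξ n ω * d := by simp [Finset.sum_const, mul_comm]
      _ ≤ d ^ n * d := by exact Nat.mul_le_mul_right d (ih)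
      _ = d ^ (n+1) := by ring

lemma gwZ_succ_sum (hd : 1 ≤ d) (n : ℕ) (ω : Ω) :
    gwZ d ξ (n+1) ω =
      ∑ i ∈ Finset.range (d ^ n), if i < gwZ d ξ n ω then min (ξ n i ω) d else 0 := by
  have hsub : Finset.range (gwZ d ξ n ω) ⊆ Finset.range (d ^ n) :=
    Finset.range_subset_range.2 (gwZ_le_pow hd n ω)
  symm
  rw [← Finset.sum_subset hsub (fun i _ hi => if_neg (fun h => hi (Finset.mem_range.2 h)))]
  exact (Finset.sum_congr rfl fun i hi => if_pos (Finset.mem_range.1 hi)).trans rfl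

lemma gwSig_mono {n n' : ℕ} (h : n ≤ n') : gwSig ξ n ≤ gwSig (Ω := Ω) ξ n' := by
  refine iSup₂_le fun p hp => le_iSup₂ (f := fun (p : ℕ × ℕ) (_ : p.1 < n') =>
    MeasurableSpace.comap (ξ p.1 p.2) inferInstance) p (lt_of_lt_of_le hp h)

lemma gwSig_le (hmeas : ∀ n i, Measurable (ξ n i)) (n : ℕ) :
    gwSig ξ n ≤ m0 := by
  exact iSup₂_le fun p _ => (hmeas p.1 p.2).comap_le

lemma measurable_comap_self (n i : ℕ) :
    Measurable[MeasurableSpace.comap (ξ n i) inferInstance] (ξ n i) :=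
  Measurable.of_comap_le le_rfl

lemma measurable_gwZ_sig (n : ℕ) : Measurable[gwSig ξ n] (gwZ d ξ n) := by
  induction n with
  | zero => exact measurable_const
  | succ n ih =>
    have hle : gwSig (Ω := Ω) ξ n ≤ gwSig ξ (n+1) := gwSig_mono (Nat.le_succ n)
    have hxi : ∀ i, Measurable[gwSig ξ (n+1)] (ξ n i) := fun i =>
      (measurable_comap_self n i).mono
        (le_iSup₂ (f := fun (p : ℕ × ℕ) (_ : p.1 < n+1) =>
          MeasurableSpace.comap (ξ p.1 p.2) inferInstance) (n, i) (Nat.lt_succ_self n)) le_rfl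
    letI := gwSig (Ω := Ω) ξ (n+1)
    apply measurable_to_countable'
    intro k
    have heq : gwZ d ξ (n+1) ⁻¹' {k} =
        ⋃ j : ℕ, ({x | gwZ d ξ n x = j} ∩
          {x | (∑ i ∈ Finset.range j, min (ξ n i x) d) = k}) := by
      ext x
      simp only [Set.mem_preimage, Set.mem_singleton_iff, Set.mem_setOf_eq, Set.mem_iUnion,
        Set.mem_inter_iff]
      rw [show gwZ d ξ (n+1) x = ∑ i ∈ Finset.range (gwZ d ξ n x), min (ξ n i x) d from rfl]
      constructor
      · intro h; exact ⟨gwZ d ξ n x, rfl, h⟩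
      · rintro ⟨j, rfl, h⟩; exact h
    rw [heq]
    refine MeasurableSet.iUnion fun j => MeasurableSet.inter ?_ ?_
    · exact (ih.mono hle le_rfl) (measurableSet_singleton j)
    · have : Measurable[gwSig ξ (n+1)] fun x => ∑ i ∈ Finset.range j, min (ξ n i x) d :=
        Finset.measurable_sum _ (fun i _ => ((hxi i).min measurable_const))
      exact this (measurableSet_singleton k)

lemma measurable_gwZ (hmeas : ∀ n i, Measurable (ξ n i)) (n : ℕ) :
    Measurable (gwZ d ξ n) :=
  (measurable_gwZ_sig n).mono (gwSig_le hmeas n) le_rfl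

lemma indep_sup (hmeas : ∀ n i, Measurable (ξ n i))
    (hindep : iIndepFun (fun p : ℕ × ℕ => ξ p.1 p.2) P)
    (n i : ℕ) {S : Set (ℕ × ℕ)} (hS : (n, i) ∉ S) :
    Indep (MeasurableSpace.comap (ξ n i) inferInstance)
      (⨆ p ∈ S, MeasurableSpace.comap (ξ p.1 p.2) inferInstance) P := by
  have h_le : ∀ p : ℕ × ℕ,
      MeasurableSpace.comap (ξ p.1 p.2) inferInstance ≤ m0 :=
    fun p => measurable_iff_comap_le.1 (hmeas p.1 p.2)
  have h := ProbabilityTheory.indep_biSup_compl h_le hindep {(n, i)}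
  rw [iSup_singleton] at h
  refine indep_of_indep_of_le_right h ?_
  refine iSup₂_le fun p hp => ?_
  refine le_iSup₂ (f := fun (p : ℕ × ℕ) (_ : p ∈ ({(n, i)} : Set (ℕ × ℕ))ᶜ) =>
    MeasurableSpace.comap (ξ p.1 p.2) inferInstance) p ?_
  intro hmem
  exact hS (by simpa using hmem ▸ hp)

lemma indep_gwSig (hmeas : ∀ n i, Measurable (ξ n i))
    (hindep : iIndepFun (fun p : ℕ × ℕ => ξ p.1 p.2) P)
    (n i : ℕ) :
    Indep (MeasurableSpace.comap (ξ n i) inferInstance) (gwSig ξ n) P := by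
  have := indep_sup (P := P) hmeas hindep n i (S := {p : ℕ × ℕ | p.1 < n})
    (by simp)
  exact this

lemma integrable_of_bounded {f : Ω → ℝ} (hf : AEStronglyMeasurable f P) {C : ℝ}
    (hb : ∀ ω, |f ω| ≤ C) : Integrable f P :=
  Integrable.mono' (integrable_const C) hf (ae_of_all _ fun ω => by
    simpa [Real.norm_eq_abs] using hb ω)

/-- key independence integral lemma -/
lemma integral_mul_indep {X Y : Ω → ℝ} {mX mY : MeasurableSpace Ω}
    (h : Indep mX mY P) (hmX : mX ≤ m0) (hmY : mY ≤ m0)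
    (hX : Measurable[mX] X) (hY : Measurable[mY] Y)
    {CX CY : ℝ} (hXb : ∀ ω, |X ω| ≤ CX) (hYb : ∀ ω, |Y ω| ≤ CY) :
    ∫ ω, X ω * Y ω ∂P = (∫ ω, X ω ∂P) * ∫ ω, Y ω ∂P := by
  have hXm : Measurable[m0] X := hX.mono hmX le_rfl
  have hYm : Measurable[m0] Y := hY.mono hmY le_rfl
  have hind : IndepFun X Y P :=
    indep_of_indep_of_le_left (indep_of_indep_of_le_right h
      (measurable_iff_comap_le.1 hY)) (measurable_iff_comap_le.1 hX)
  exact hind.integral_mul_eq_mul_integral hXm.aestronglyMeasurable hYm.aestronglyMeasurable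

lemma sum_indicator {M K : ℕ} (h : K ≤ M) :
    ∑ i ∈ Finset.range M, (if i < K then (1:ℝ) else 0) = K := by
  rw [← Finset.sum_subset (Finset.range_subset_range.2 h)
    (fun i _ hi => if_neg (fun hl => hi (Finset.mem_range.2 hl)))]
  rw [Finset.sum_congr rfl fun i hi => if_pos (Finset.mem_range.1 hi)]
  simp

section Steps

variable {m1 m2 : ℝ}

lemma step_mul (hd : 1 ≤ d) (hmeas : ∀ n i, Measurable (ξ n i))
    (hindep : iIndepFun (fun p : ℕ × ℕ => ξ p.1 p.2) P)
    {n : ℕ} (hmom : ∀ i, ∫ ω, ((min (ξ n i ω) d : ℕ) : ℝ) ∂P = m1)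
    {Y : Ω → ℝ} (hY : Measurable[gwSig ξ n] Y) {C : ℝ} (hYb : ∀ ω, |Y ω| ≤ C) :
    ∫ ω, (gwZ d ξ (n+1) ω : ℝ) * Y ω ∂P = m1 * ∫ ω, (gwZ d ξ n ω : ℝ) * Y ω ∂P := by
  classical
  set M := d ^ n with hM
  set X : ℕ → Ω → ℝ := fun i ω => ((min (ξ n i ω) d : ℕ) : ℝ) with hX
  set u : ℕ → Ω → ℝ := fun i ω => if i < gwZ d ξ n ω then (1:ℝ) else 0 with hu
  have hYm : Measurable[m0] Y := hY.mono (gwSig_le hmeas n) le_rfl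
  have hXmc : ∀ i, Measurable[MeasurableSpace.comap (ξ n i) inferInstance] (X i) :=
    fun i => (measurable_from_top (f := fun k : ℕ => ((min k d : ℕ) : ℝ))).comp
      (measurable_comap_self n i)
  have hXm : ∀ i, Measurable[m0] (X i) := fun i =>
    (hXmc i).mono (measurable_iff_comap_le.1 (hmeas n i)) le_rfl
  have hXb : ∀ i ω, |X i ω| ≤ d := fun i ω => by
    rw [abs_of_nonneg (by positivity)]
    exact_mod_cast Nat.cast_le.2 (min_le_right _ _)
  have huset : ∀ i, MeasurableSet[gwSig ξ n] {ω | i < gwZ d ξ n ω} := fun i =>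
    measurableSet_lt measurable_const (measurable_gwZ_sig n)
  have hum : ∀ i, Measurable[gwSig ξ n] (u i) := fun i =>
    Measurable.ite (huset i) measurable_const measurable_const
  have hub : ∀ i ω, |u i ω| ≤ 1 := fun i ω => by
    by_cases h : i < gwZ d ξ n ω <;> simp [hu, h]
  have hZm : Measurable[gwSig ξ n] fun ω => (gwZ d ξ n ω : ℝ) :=
    measurable_from_top.comp (measurable_gwZ_sig n)
  have hZb : ∀ ω, |(gwZ d ξ n ω : ℝ)| ≤ (d : ℝ) ^ n := fun ω => by
    rw [abs_of_nonneg (by positivity)]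
    exact_mod_cast Nat.cast_le.2 (gwZ_le_pow hd n ω)
  have hsum : ∀ ω, ∑ i ∈ Finset.range M, u i ω = (gwZ d ξ n ω : ℝ) :=
    fun ω => by rw [sum_indicator (gwZ_le_pow hd n ω)]
  have hpt : ∀ ω, (gwZ d ξ (n+1) ω : ℝ) = ∑ i ∈ Finset.range M, X i ω * u i ω := by
    intro ω
    rw [show (gwZ d ξ (n+1) ω : ℝ)
        = ((∑ i ∈ Finset.range M, if i < gwZ d ξ n ω then min (ξ n i ω) d else 0 : ℕ) : ℝ)
      from by rw [← gwZ_succ_sum hd n ω]]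
    push_cast
    refine Finset.sum_congr rfl fun i _ => ?_
    by_cases h : i < gwZ d ξ n ω <;> simp [hX, hu, h]
  have humm : ∀ i, Measurable[m0] (u i) := fun i => (hum i).mono (gwSig_le hmeas n) le_rfl
  have huY : ∀ i, Integrable (fun ω => u i ω * Y ω) P := by
    intro i
    refine integrable_of_bounded (C := 1 * C)
      (((humm i).mul hYm).aestronglyMeasurable) (fun ω => ?_)
    rw [abs_mul]
    exact mul_le_mul (hub i ω) (hYb ω) (abs_nonneg _) zero_le_one
  have hterm : ∀ i, ∫ ω, X i ω * (u i ω * Y ω) ∂P = m1 * ∫ ω, u i ω * Y ω ∂P := by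
    intro i
    rw [integral_mul_indep (indep_gwSig hmeas hindep n i)
      (measurable_iff_comap_le.1 (hmeas n i)) (gwSig_le hmeas n)
      (Y := fun ω => u i ω * Y ω) (hXmc i) ((hum i).mul hY) (hXb i) (fun ω => by
        rw [abs_mul]
        exact mul_le_mul (hub i ω) (hYb ω) (abs_nonneg _) zero_le_one)
      (CX := d) (CY := 1 * C)]
    rw [hmom i]
  calc ∫ ω, (gwZ d ξ (n+1) ω : ℝ) * Y ω ∂P
      = ∫ ω, ∑ i ∈ Finset.range M, X i ω * (u i ω * Y ω) ∂P := by
        refine integral_congr_ae (ae_of_all _ fun ω => ?_)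
        show (gwZ d ξ (n+1) ω : ℝ) * Y ω = ∑ i ∈ Finset.range M, X i ω * (u i ω * Y ω)
        rw [hpt ω, Finset.sum_mul]
        exact Finset.sum_congr rfl fun i _ => (mul_assoc _ _ _)
    _ = ∑ i ∈ Finset.range M, ∫ ω, X i ω * (u i ω * Y ω) ∂P := by
        refine integral_finset_sum _ fun i _ => ?_
        refine integrable_of_bounded (C := d * (1 * C))
          (((hXm i).mul ((humm i).mul hYm)).aestronglyMeasurable)
          (fun ω => ?_)
        rw [abs_mul, abs_mul]
        exact mul_le_mul (hXb i ω)
          (mul_le_mul (hub i ω) (hYb ω) (abs_nonneg _) zero_le_one)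
          (by positivity) (by positivity)
    _ = ∑ i ∈ Finset.range M, m1 * ∫ ω, u i ω * Y ω ∂P :=
        Finset.sum_congr rfl fun i _ => hterm i
    _ = m1 * ∑ i ∈ Finset.range M, ∫ ω, u i ω * Y ω ∂P := by rw [Finset.mul_sum]
    _ = m1 * ∫ ω, ∑ i ∈ Finset.range M, u i ω * Y ω ∂P := by
        rw [integral_finset_sum _ fun i _ => huY i]
    _ = m1 * ∫ ω, (gwZ d ξ n ω : ℝ) * Y ω ∂P := by
        congr 1
        refine integral_congr_ae (ae_of_all _ fun ω => ?_)
        show ∑ i ∈ Finset.range M, u i ω * Y ω = (gwZ d ξ n ω : ℝ) * Y ω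
        rw [← Finset.sum_mul, hsum ω]

lemma step_sq (hd : 1 ≤ d) (hmeas : ∀ n i, Measurable (ξ n i))
    (hindep : iIndepFun (fun p : ℕ × ℕ => ξ p.1 p.2) P)
    {n : ℕ} (hmom : ∀ i, ∫ ω, ((min (ξ n i ω) d : ℕ) : ℝ) ∂P = m1)
    (hmom2 : ∀ i, ∫ ω, (((min (ξ n i ω) d : ℕ) : ℝ)) ^ 2 ∂P = m2) :
    ∫ ω, ((gwZ d ξ (n+1) ω : ℝ)) ^ 2 ∂P
      = m2 * ∫ ω, (gwZ d ξ n ω : ℝ) ∂P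
        + m1 ^ 2 * ((∫ ω, ((gwZ d ξ n ω : ℝ)) ^ 2 ∂P) - ∫ ω, (gwZ d ξ n ω : ℝ) ∂P) := by
  classical
  set M := d ^ n with hM
  set X : ℕ → Ω → ℝ := fun i ω => ((min (ξ n i ω) d : ℕ) : ℝ) with hX
  set u : ℕ → Ω → ℝ := fun i ω => if i < gwZ d ξ n ω then (1:ℝ) else 0 with hu
  have hXmc : ∀ i, Measurable[MeasurableSpace.comap (ξ n i) inferInstance] (X i) :=
    fun i => (measurable_from_top (f := fun k : ℕ => ((min k d : ℕ) : ℝ))).comp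
      (measurable_comap_self n i)
  have hXm : ∀ i, Measurable[m0] (X i) := fun i =>
    (hXmc i).mono (measurable_iff_comap_le.1 (hmeas n i)) le_rfl
  have hXb : ∀ i ω, |X i ω| ≤ d := fun i ω => by
    rw [abs_of_nonneg (by positivity)]
    exact_mod_cast Nat.cast_le.2 (min_le_right _ _)
  have huset : ∀ i, MeasurableSet[gwSig ξ n] {ω | i < gwZ d ξ n ω} := fun i =>
    measurableSet_lt measurable_const (measurable_gwZ_sig n)
  have hum : ∀ i, Measurable[gwSig ξ n] (u i) := fun i =>
    Measurable.ite (huset i) measurable_const measurable_const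
  have humm : ∀ i, Measurable[m0] (u i) := fun i => (hum i).mono (gwSig_le hmeas n) le_rfl
  have hub : ∀ i ω, |u i ω| ≤ 1 := fun i ω => by
    by_cases h : i < gwZ d ξ n ω <;> simp [hu, h]
  have hsum : ∀ ω, ∑ i ∈ Finset.range M, u i ω = (gwZ d ξ n ω : ℝ) :=
    fun ω => by rw [sum_indicator (gwZ_le_pow hd n ω)]
  have hpt : ∀ ω, (gwZ d ξ (n+1) ω : ℝ) = ∑ i ∈ Finset.range M, X i ω * u i ω := by
    intro ω
    rw [show (gwZ d ξ (n+1) ω : ℝ)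
        = ((∑ i ∈ Finset.range M, if i < gwZ d ξ n ω then min (ξ n i ω) d else 0 : ℕ) : ℝ)
      from by rw [← gwZ_succ_sum hd n ω]]
    push_cast
    refine Finset.sum_congr rfl fun i _ => ?_
    by_cases h : i < gwZ d ξ n ω <;> simp [hX, hu, h]
  have huu_int : ∀ i j, Integrable (fun ω => u i ω * u j ω) P := fun i j =>
    integrable_of_bounded (C := 1 * 1) (((humm i).mul (humm j)).aestronglyMeasurable)
      (fun ω => by
        rw [abs_mul]
        exact mul_le_mul (hub i ω) (hub j ω) (abs_nonneg _) zero_le_one)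
  have hu_int : ∀ i, Integrable (u i) P := fun i =>
    integrable_of_bounded (C := 1) ((humm i).aestronglyMeasurable) (hub i)
  have huu_eq : ∀ i, (fun ω => u i ω * u i ω) = u i := by
    intro i
    funext ω
    by_cases h : i < gwZ d ξ n ω <;> simp [hu, h]
  -- the key per-pair computation
  have key : ∀ i j, i ≠ j →
      ∫ ω, (X i ω * u i ω) * (X j ω * u j ω) ∂P
        = m1 ^ 2 * ∫ ω, u i ω * u j ω ∂P := by
    intro i j hij
    have hindij : Indep (MeasurableSpace.comap (ξ n j) inferInstance)
        ((MeasurableSpace.comap (ξ n i) inferInstance) ⊔ gwSig ξ n) P := by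
      have h := indep_sup (P := P) hmeas hindep n j
        (S := insert ((n, i) : ℕ × ℕ) {p : ℕ × ℕ | p.1 < n})
        (by simp [Prod.ext_iff, Ne.symm hij])
      rwa [iSup_insert] at h
    have hmB : (MeasurableSpace.comap (ξ n i) inferInstance) ⊔ gwSig ξ n ≤ m0 :=
      sup_le (measurable_iff_comap_le.1 (hmeas n i)) (gwSig_le hmeas n)
    have step1 : ∫ ω, (X i ω * u i ω) * (X j ω * u j ω) ∂P
        = ∫ ω, X j ω * (X i ω * (u i ω * u j ω)) ∂P := by
      refine integral_congr_ae (ae_of_all _ fun ω => ?_); ring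
    have step2 : ∫ ω, X j ω * (X i ω * (u i ω * u j ω)) ∂P
        = m1 * ∫ ω, X i ω * (u i ω * u j ω) ∂P := by
      rw [integral_mul_indep hindij (measurable_iff_comap_le.1 (hmeas n j)) hmB
        (Y := fun ω => X i ω * (u i ω * u j ω)) (hXmc j)
        (((hXmc i).mono le_sup_left le_rfl).mul
          (((hum i).mono le_sup_right le_rfl).mul ((hum j).mono le_sup_right le_rfl)))
        (hXb j) (CY := d * (1 * 1)) (fun ω => by
          rw [abs_mul, abs_mul]
          exact mul_le_mul (hXb i ω)
            (mul_le_mul (hub i ω) (hub j ω) (abs_nonneg _) zero_le_one)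
            (by positivity) (by positivity))]
      rw [hmom j]
    have step3 : ∫ ω, X i ω * (u i ω * u j ω) ∂P = m1 * ∫ ω, u i ω * u j ω ∂P := by
      rw [integral_mul_indep (indep_gwSig hmeas hindep n i)
        (measurable_iff_comap_le.1 (hmeas n i)) (gwSig_le hmeas n)
        (Y := fun ω => u i ω * u j ω) (hXmc i) ((hum i).mul (hum j)) (hXb i) (CY := 1 * 1) (fun ω => by
          rw [abs_mul]
          exact mul_le_mul (hub i ω) (hub j ω) (abs_nonneg _) zero_le_one)]
      rw [hmom i]
    rw [step1, step2, step3]; ring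
  have keyd : ∀ i, ∫ ω, (X i ω * u i ω) * (X i ω * u i ω) ∂P = m2 * ∫ ω, u i ω ∂P := by
    intro i
    have step1 : ∫ ω, (X i ω * u i ω) * (X i ω * u i ω) ∂P
        = ∫ ω, (X i ω ^ 2) * u i ω ∂P := by
      refine integral_congr_ae (ae_of_all _ fun ω => ?_)
      by_cases h : i < gwZ d ξ n ω <;> simp [hu, h] <;> ring
    rw [step1]
    rw [integral_mul_indep (indep_gwSig hmeas hindep n i)
      (measurable_iff_comap_le.1 (hmeas n i)) (gwSig_le hmeas n)
      ((hXmc i).pow_const 2) (hum i) (CX := (d:ℝ)^2) (fun ω => by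
        rw [abs_pow]
        exact pow_le_pow_left₀ (abs_nonneg _) (hXb i ω) 2) (hub i)]
    rw [hmom2 i]
  have hTint : ∀ i j, Integrable (fun ω => (X i ω * u i ω) * (X j ω * u j ω)) P := by
    intro i j
    refine integrable_of_bounded (C := (d * 1) * (d * 1))
      ((((hXm i).mul (humm i)).mul ((hXm j).mul (humm j))).aestronglyMeasurable)
      (fun ω => ?_)
    rw [abs_mul, abs_mul, abs_mul]
    have h1 : |X i ω| * |u i ω| ≤ d * 1 :=
      mul_le_mul (hXb i ω) (hub i ω) (abs_nonneg _) (by positivity)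
    have h2 : |X j ω| * |u j ω| ≤ d * 1 :=
      mul_le_mul (hXb j ω) (hub j ω) (abs_nonneg _) (by positivity)
    exact mul_le_mul h1 h2 (by positivity) (by positivity)
  -- expand the square of the sum
  have expand : ∫ ω, ((gwZ d ξ (n+1) ω : ℝ)) ^ 2 ∂P
      = ∑ i ∈ Finset.range M, ∑ j ∈ Finset.range M,
          ∫ ω, (X i ω * u i ω) * (X j ω * u j ω) ∂P := by
    have e1 : ∫ ω, ((gwZ d ξ (n+1) ω : ℝ)) ^ 2 ∂P
        = ∫ ω, ∑ i ∈ Finset.range M, ∑ j ∈ Finset.range M,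
            (X i ω * u i ω) * (X j ω * u j ω) ∂P := by
      refine integral_congr_ae (ae_of_all _ fun ω => ?_)
      show (gwZ d ξ (n+1) ω : ℝ) ^ 2 = _
      rw [hpt ω, sq, Finset.sum_mul_sum]
    rw [e1, integral_finset_sum _ fun i _ => ?_]
    · refine Finset.sum_congr rfl fun i _ => ?_
      rw [integral_finset_sum _ fun j _ => hTint i j]
    · exact integrable_finset_sum _ fun j _ => hTint i j
  rw [expand]
  have diag : ∀ i ∈ Finset.range M,
      ∑ j ∈ Finset.range M, ∫ ω, (X i ω * u i ω) * (X j ω * u j ω) ∂P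
        = (∑ j ∈ Finset.range M, m1 ^ 2 * ∫ ω, u i ω * u j ω ∂P)
          + (m2 * ∫ ω, u i ω ∂P - m1 ^ 2 * ∫ ω, u i ω * u i ω ∂P) := by
    intro i hi
    have : ∀ j, ∫ ω, (X i ω * u i ω) * (X j ω * u j ω) ∂P
        = m1 ^ 2 * ∫ ω, u i ω * u j ω ∂P
          + (if i = j then m2 * ∫ ω, u i ω ∂P - m1 ^ 2 * ∫ ω, u i ω * u i ω ∂P else 0) := by
      intro j
      by_cases h : i = j
      · subst h
        rw [keyd i, if_pos rfl]; ring
      · rw [key i j h, if_neg h]; ring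
    rw [Finset.sum_congr rfl fun j _ => this j, Finset.sum_add_distrib,
      Finset.sum_ite_eq (Finset.range M) i _, if_pos hi]
  rw [Finset.sum_congr rfl diag, Finset.sum_add_distrib]
  have hZint : Integrable (fun ω => (gwZ d ξ n ω : ℝ)) P := by
    refine integrable_of_bounded (C := (d:ℝ) ^ n)
      ((measurable_from_top.comp (measurable_gwZ hmeas n)).aestronglyMeasurable)
      (fun ω => ?_)
    rw [abs_of_nonneg (by positivity)]
    exact_mod_cast Nat.cast_le.2 (gwZ_le_pow hd n ω)
  have sum_u : ∑ i ∈ Finset.range M, ∫ ω, u i ω ∂P = ∫ ω, (gwZ d ξ n ω : ℝ) ∂P := by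
    rw [← integral_finset_sum _ fun i _ => hu_int i]
    exact integral_congr_ae (ae_of_all _ fun ω => hsum ω)
  have sum_uu : ∑ i ∈ Finset.range M, ∑ j ∈ Finset.range M, ∫ ω, u i ω * u j ω ∂P
      = ∫ ω, ((gwZ d ξ n ω : ℝ)) ^ 2 ∂P := by
    have : ∀ i ∈ Finset.range M, ∑ j ∈ Finset.range M, ∫ ω, u i ω * u j ω ∂P
        = ∫ ω, u i ω * (gwZ d ξ n ω : ℝ) ∂P := by
      intro i _
      rw [← integral_finset_sum _ fun j _ => huu_int i j]
      refine integral_congr_ae (ae_of_all _ fun ω => ?_)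
      show ∑ j ∈ Finset.range M, u i ω * u j ω = u i ω * (gwZ d ξ n ω : ℝ)
      rw [← Finset.mul_sum, hsum ω]
    have hZmm : Measurable[m0] fun ω => (gwZ d ξ n ω : ℝ) :=
      measurable_from_top.comp (measurable_gwZ hmeas n)
    have hint2 : ∀ i, Integrable (fun ω => u i ω * (gwZ d ξ n ω : ℝ)) P := fun i =>
      integrable_of_bounded (C := 1 * (d:ℝ) ^ n)
        (((humm i).mul hZmm).aestronglyMeasurable)
        (fun ω => by
          rw [abs_mul]
          refine mul_le_mul (hub i ω) ?_ (abs_nonneg _) (by positivity)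
          rw [abs_of_nonneg (by positivity)]
          exact_mod_cast Nat.cast_le.2 (gwZ_le_pow hd n ω))
    rw [Finset.sum_congr rfl this, ← integral_finset_sum _ fun i _ => hint2 i]
    refine integral_congr_ae (ae_of_all _ fun ω => ?_)
    show ∑ i ∈ Finset.range M, u i ω * (gwZ d ξ n ω : ℝ) = (gwZ d ξ n ω : ℝ) ^ 2
    rw [← Finset.sum_mul, hsum ω, sq]
  calc (∑ i ∈ Finset.range M, ∑ j ∈ Finset.range M, m1 ^ 2 * ∫ ω, u i ω * u j ω ∂P)
        + ∑ i ∈ Finset.range M,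
            (m2 * ∫ ω, u i ω ∂P - m1 ^ 2 * ∫ ω, u i ω * u i ω ∂P)
      = m1 ^ 2 * (∑ i ∈ Finset.range M, ∑ j ∈ Finset.range M, ∫ ω, u i ω * u j ω ∂P)
        + (m2 * ∑ i ∈ Finset.range M, ∫ ω, u i ω ∂P
          - m1 ^ 2 * ∑ i ∈ Finset.range M, ∫ ω, u i ω ∂P) := by
        rw [Finset.mul_sum, Finset.sum_sub_distrib, Finset.mul_sum, Finset.mul_sum]
        congr 1
        · exact Finset.sum_congr rfl fun i _ => by rw [Finset.mul_sum]
        · congr 1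
          exact Finset.sum_congr rfl fun i _ => by rw [huu_eq i]
    _ = m2 * ∫ ω, (gwZ d ξ n ω : ℝ) ∂P
        + m1 ^ 2 * ((∫ ω, ((gwZ d ξ n ω : ℝ)) ^ 2 ∂P) - ∫ ω, (gwZ d ξ n ω : ℝ) ∂P) := by
        rw [sum_u, sum_uu]; ring

noncomputable def gwW (d : ℕ) (ξ : ℕ → ℕ → Ω → ℕ) (m : ℝ) (n : ℕ) (ω : Ω) : ℝ :=
  (gwZ d ξ n ω : ℝ) / m ^ n

lemma hZb' (hd : 1 ≤ d) (k : ℕ) (ω : Ω) : |(gwZ d ξ k ω : ℝ)| ≤ (d:ℝ) ^ k := by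
  rw [abs_of_nonneg (by positivity)]
  exact_mod_cast Nat.cast_le.2 (gwZ_le_pow hd k ω)

lemma hZm' (hmeas : ∀ n i, Measurable (ξ n i)) (k : ℕ) :
    Measurable[m0] fun ω => (gwZ d ξ k ω : ℝ) :=
  measurable_from_top.comp (measurable_gwZ hmeas k)

lemma integrable_ZZ (hd : 1 ≤ d) (hmeas : ∀ n i, Measurable (ξ n i)) (k l : ℕ) :
    Integrable (fun ω => (gwZ d ξ k ω : ℝ) * (gwZ d ξ l ω : ℝ)) P :=
  integrable_of_bounded (C := (d:ℝ) ^ k * (d:ℝ) ^ l)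
    (((hZm' hmeas k).mul (hZm' hmeas l)).aestronglyMeasurable)
    (fun ω => by
      rw [abs_mul]
      exact mul_le_mul (hZb' hd k ω) (hZb' hd l ω) (abs_nonneg _) (by positivity))

lemma integrable_Z (hd : 1 ≤ d) (hmeas : ∀ n i, Measurable (ξ n i)) (k : ℕ) :
    Integrable (fun ω => (gwZ d ξ k ω : ℝ)) P :=
  integrable_of_bounded (C := (d:ℝ) ^ k) ((hZm' hmeas k).aestronglyMeasurable) (hZb' hd k)

lemma int_gwZ (hd : 1 ≤ d) (hmeas : ∀ n i, Measurable (ξ n i))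
    (hindep : iIndepFun (fun p : ℕ × ℕ => ξ p.1 p.2) P)
    (hmom : ∀ n i, ∫ ω, ((min (ξ n i ω) d : ℕ) : ℝ) ∂P = m1) (n : ℕ) :
    ∫ ω, (gwZ d ξ n ω : ℝ) ∂P = m1 ^ n := by
  induction n with
  | zero =>
    simp only [pow_zero]
    rw [show (fun ω => ((gwZ d ξ 0 ω : ℕ) : ℝ)) = fun _ => (1:ℝ) from
      funext fun ω => by simp [gwZ]]
    simp
  | succ n ih =>
    have h := step_mul (P := P) hd hmeas hindep (hmom n) (Y := fun _ => (1:ℝ))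
      measurable_const (C := 1) (fun ω => by norm_num)
    simp only [mul_one] at h
    rw [h, ih, pow_succ]
    ring

/-- expansion of ∫ (a f - b g)^2 -/
lemma integral_sub_sq {f g : Ω → ℝ} (a b : ℝ)
    (hf2 : Integrable (fun ω => f ω ^ 2) P) (hg2 : Integrable (fun ω => g ω ^ 2) P)
    (hfg : Integrable (fun ω => f ω * g ω) P) :
    ∫ ω, (a * f ω - b * g ω) ^ 2 ∂P
      = a ^ 2 * ∫ ω, f ω ^ 2 ∂P - 2 * a * b * ∫ ω, f ω * g ω ∂P
        + b ^ 2 * ∫ ω, g ω ^ 2 ∂P := by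
  have hpt : (fun ω => (a * f ω - b * g ω) ^ 2)
      = fun ω => (a ^ 2 * f ω ^ 2 - 2 * a * b * (f ω * g ω)) + b ^ 2 * g ω ^ 2 :=
    funext fun ω => by ring
  have h1 : Integrable (fun ω => a ^ 2 * f ω ^ 2 - 2 * a * b * (f ω * g ω)) P :=
    (hf2.const_mul _).sub (hfg.const_mul _)
  have h2 : Integrable (fun ω => b ^ 2 * g ω ^ 2) P := hg2.const_mul _
  have h3 : Integrable (fun ω => a ^ 2 * f ω ^ 2) P := hf2.const_mul _
  have h4 : Integrable (fun ω => 2 * a * b * (f ω * g ω)) P := hfg.const_mul _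
  rw [hpt, integral_add h1 h2, integral_sub h3 h4,
    integral_const_mul, integral_const_mul, integral_const_mul]

lemma step_diff (hd : 1 ≤ d) (hmeas : ∀ n i, Measurable (ξ n i))
    (hindep : iIndepFun (fun p : ℕ × ℕ => ξ p.1 p.2) P)
    (hm1 : 1 < m1)
    (hmom : ∀ n i, ∫ ω, ((min (ξ n i ω) d : ℕ) : ℝ) ∂P = m1)
    (hmom2 : ∀ n i, ∫ ω, (((min (ξ n i ω) d : ℕ) : ℝ)) ^ 2 ∂P = m2)
    {N n : ℕ} (hNn : N ≤ n) :
    ∫ ω, (gwW d ξ m1 (n+1) ω - gwW d ξ m1 N ω) ^ 2 ∂P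
      = (∫ ω, (gwW d ξ m1 n ω - gwW d ξ m1 N ω) ^ 2 ∂P)
        + (m2 - m1 ^ 2) * (1 / m1) ^ (n + 2) := by
  have hm0 : (0:ℝ) < m1 := lt_trans one_pos hm1
  have hmne : m1 ≠ 0 := ne_of_gt hm0
  -- the three second-moment identities
  have hA : ∫ ω, ((gwZ d ξ (n+1) ω : ℝ)) ^ 2 ∂P
      = m2 * ∫ ω, (gwZ d ξ n ω : ℝ) ∂P
        + m1 ^ 2 * ((∫ ω, ((gwZ d ξ n ω : ℝ)) ^ 2 ∂P) - ∫ ω, (gwZ d ξ n ω : ℝ) ∂P) :=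
    step_sq hd hmeas hindep (hmom n) (hmom2 n)
  have hB : ∫ ω, (gwZ d ξ (n+1) ω : ℝ) * (gwZ d ξ N ω : ℝ) ∂P
      = m1 * ∫ ω, (gwZ d ξ n ω : ℝ) * (gwZ d ξ N ω : ℝ) ∂P := by
    refine step_mul hd hmeas hindep (hmom n)
      ((measurable_from_top.comp (measurable_gwZ_sig N)).mono (gwSig_mono hNn) le_rfl)
      (C := (d:ℝ) ^ N) (hZb' hd N)
  have hE : ∫ ω, (gwZ d ξ n ω : ℝ) ∂P = m1 ^ n := int_gwZ hd hmeas hindep hmom n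
  -- expansion on both sides
  have hsq : ∀ k, Integrable (fun ω => ((gwZ d ξ k ω : ℝ)) ^ 2) P := by
    intro k
    have := integrable_ZZ (P := P) (ξ := ξ) hd hmeas k k
    refine this.congr (ae_of_all _ fun ω => ?_)
    ring
  have hW : ∀ k ω, gwW d ξ m1 k ω = (1 / m1 ^ k) * (gwZ d ξ k ω : ℝ) := by
    intro k ω
    rw [gwW, div_eq_mul_inv, one_div, mul_comm]
  have expand : ∀ k, ∫ ω, (gwW d ξ m1 k ω - gwW d ξ m1 N ω) ^ 2 ∂P
      = (1 / m1 ^ k) ^ 2 * ∫ ω, ((gwZ d ξ k ω : ℝ)) ^ 2 ∂P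
        - 2 * (1 / m1 ^ k) * (1 / m1 ^ N)
            * ∫ ω, (gwZ d ξ k ω : ℝ) * (gwZ d ξ N ω : ℝ) ∂P
        + (1 / m1 ^ N) ^ 2 * ∫ ω, ((gwZ d ξ N ω : ℝ)) ^ 2 ∂P := by
    intro k
    rw [← integral_sub_sq (1 / m1 ^ k) (1 / m1 ^ N) (hsq k) (hsq N)
      (integrable_ZZ hd hmeas k N)]
    refine integral_congr_ae (ae_of_all _ fun ω => ?_)
    show (gwW d ξ m1 k ω - gwW d ξ m1 N ω) ^ 2
      = (1 / m1 ^ k * (gwZ d ξ k ω : ℝ) - 1 / m1 ^ N * (gwZ d ξ N ω : ℝ)) ^ 2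
    rw [hW k ω, hW N ω]
  rw [expand (n+1), expand n, hA, hB, hE]
  simp only [div_pow, one_pow]
  field_simp
  ring

lemma gwW_L2 (hd : 1 ≤ d) (hmeas : ∀ n i, Measurable (ξ n i))
    (hindep : iIndepFun (fun p : ℕ × ℕ => ξ p.1 p.2) P)
    (hm1 : 1 < m1)
    (hmom : ∀ n i, ∫ ω, ((min (ξ n i ω) d : ℕ) : ℝ) ∂P = m1)
    (hmom2 : ∀ n i, ∫ ω, (((min (ξ n i ω) d : ℕ) : ℝ)) ^ 2 ∂P = m2)
    {N n : ℕ} (hNn : N ≤ n) :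
    ∫ ω, (gwW d ξ m1 n ω - gwW d ξ m1 N ω) ^ 2 ∂P
      ≤ (max (m2 - m1 ^ 2) 0 / (m1 * (m1 - 1))) * ((1 / m1) ^ N - (1 / m1) ^ n) := by
  have hm0 : (0:ℝ) < m1 := lt_trans one_pos hm1
  set K : ℝ := max (m2 - m1 ^ 2) 0 / (m1 * (m1 - 1)) with hK
  have hKnn : 0 ≤ K := by
    apply div_nonneg (le_max_right _ _)
    nlinarith
  obtain ⟨k, rfl⟩ : ∃ k, n = N + k := ⟨n - N, (Nat.add_sub_cancel' hNn).symm⟩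
  clear hNn
  induction k with
  | zero =>
    have e : ∫ ω, (gwW d ξ m1 (N+0) ω - gwW d ξ m1 N ω) ^ 2 ∂P = ∫ (_ : Ω), (0:ℝ) ∂P :=
      integral_congr_ae (ae_of_all _ fun ω => by simp)
    rw [e]
    simp
  | succ k ih =>
    rw [show N + (k+1) = (N + k) + 1 from rfl,
      step_diff hd hmeas hindep hm1 hmom hmom2 (Nat.le_add_right N k)]
    have hstep : (m2 - m1 ^ 2) * (1 / m1) ^ (N + k + 2)
        ≤ K * ((1 / m1) ^ (N + k) - (1 / m1) ^ (N + k + 1)) := by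
      have h1 : (m2 - m1 ^ 2) * (1 / m1) ^ (N + k + 2)
          ≤ max (m2 - m1 ^ 2) 0 * (1 / m1) ^ (N + k + 2) := by
        apply mul_le_mul_of_nonneg_right (le_max_left _ _) (by positivity)
      refine h1.trans (le_of_eq ?_)
      rw [hK]
      have hmm : m1 * (m1 - 1) ≠ 0 := by nlinarith
      have hm1' : m1 - 1 ≠ 0 := by linarith
      simp only [div_pow, one_pow]
      field_simp
      ring
    calc (∫ ω, (gwW d ξ m1 (N+k) ω - gwW d ξ m1 N ω) ^ 2 ∂P)
          + (m2 - m1 ^ 2) * (1 / m1) ^ (N + k + 2)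
        ≤ K * ((1 / m1) ^ N - (1 / m1) ^ (N + k))
          + K * ((1 / m1) ^ (N + k) - (1 / m1) ^ (N + k + 1)) := add_le_add ih hstep
      _ = K * ((1 / m1) ^ N - (1 / m1) ^ (N + (k+1))) := by ring_nf

lemma integral_abs_le_sqrt {g : Ω → ℝ} (hg : Integrable g P)
    (hg2 : Integrable (fun ω => g ω ^ 2) P) :
    ∫ ω, |g ω| ∂P ≤ Real.sqrt (∫ ω, g ω ^ 2 ∂P) := by
  set a := ∫ ω, |g ω| ∂P with ha
  have hann : 0 ≤ a := integral_nonneg fun ω => abs_nonneg _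
  have h2nn : 0 ≤ ∫ ω, g ω ^ 2 ∂P := integral_nonneg fun ω => sq_nonneg _
  rw [Real.le_sqrt hann h2nn]
  have hexp : ∫ ω, (|g ω| - a) ^ 2 ∂P = (∫ ω, g ω ^ 2 ∂P) - a ^ 2 := by
    have hpt : (fun ω => (|g ω| - a) ^ 2)
        = fun ω => (g ω ^ 2 - (2 * a) * |g ω|) + a ^ 2 := funext fun ω => by
      have : |g ω| ^ 2 = g ω ^ 2 := sq_abs _
      nlinarith [this]
    have h1 : Integrable (fun ω => g ω ^ 2 - (2 * a) * |g ω|) P :=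
      hg2.sub (hg.abs.const_mul _)
    rw [hpt, integral_add h1 (integrable_const _), integral_sub hg2 (hg.abs.const_mul _),
      integral_const_mul, integral_const]
    simp [← ha]
    ring
  have : 0 ≤ ∫ ω, (|g ω| - a) ^ 2 ∂P := integral_nonneg fun ω => sq_nonneg _
  linarith [hexp ▸ this]

lemma gwW_integrable (hd : 1 ≤ d) (hmeas : ∀ n i, Measurable (ξ n i)) {m : ℝ} (n : ℕ) :
    Integrable (gwW d ξ m n) P := by
  have : gwW d ξ m n = fun ω => (gwZ d ξ n ω : ℝ) / m ^ n := rfl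
  rw [this]
  exact (integrable_Z hd hmeas n).div_const _

lemma gwW_measurable (hmeas : ∀ n i, Measurable (ξ n i)) {m : ℝ} (n : ℕ) :
    Measurable[m0] (gwW d ξ m n) := (hZm' hmeas n).div_const _

/-- almost sure convergence of the truncated normalized process -/
lemma gwW_tendsto (hd : 1 ≤ d) (hmeas : ∀ n i, Measurable (ξ n i))
    (hindep : iIndepFun (fun p : ℕ × ℕ => ξ p.1 p.2) P)
    (hm1 : 1 < m1)
    (hmom : ∀ n i, ∫ ω, ((min (ξ n i ω) d : ℕ) : ℝ) ∂P = m1)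
    (hmom2 : ∀ n i, ∫ ω, (((min (ξ n i ω) d : ℕ) : ℝ)) ^ 2 ∂P = m2) :
    ∀ᵐ ω ∂P, ∃ L : ℝ, Tendsto (fun n => gwW d ξ m1 n ω) atTop (𝓝 L) := by
  have hm0 : (0:ℝ) < m1 := lt_trans one_pos hm1
  set K : ℝ := max (m2 - m1 ^ 2) 0 / (m1 * (m1 - 1)) with hK
  have hKnn : 0 ≤ K := div_nonneg (le_max_right _ _) (by nlinarith)
  set g : ℕ → Ω → ℝ := fun n ω => gwW d ξ m1 (n+1) ω - gwW d ξ m1 n ω with hg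
  have hgint : ∀ n, Integrable (g n) P := fun n =>
    (gwW_integrable hd hmeas (n+1)).sub (gwW_integrable hd hmeas n)
  have hgm : ∀ n, Measurable[m0] (g n) := fun n =>
    (gwW_measurable hmeas (n+1)).sub (gwW_measurable hmeas n)
  have hWb : ∀ k ω, |gwW d ξ m1 k ω| ≤ (d:ℝ) ^ k / m1 ^ k := by
    intro k ω
    rw [show gwW d ξ m1 k ω = (gwZ d ξ k ω : ℝ) / m1 ^ k from rfl, abs_div,
      abs_of_pos (pow_pos hm0 k)]
    gcongr
    exact hZb' hd k ω
  have hgb : ∀ n ω, |g n ω| ≤ (d:ℝ) ^ (n+1) / m1 ^ (n+1) + (d:ℝ) ^ n / m1 ^ n := by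
    intro n ω
    refine (abs_sub _ _).trans (add_le_add (hWb (n+1) ω) (hWb n ω))
  have hg2int : ∀ n, Integrable (fun ω => g n ω ^ 2) P := by
    intro n
    refine integrable_of_bounded
      (C := ((d:ℝ) ^ (n+1) / m1 ^ (n+1) + (d:ℝ) ^ n / m1 ^ n) ^ 2)
      (((hgm n).pow_const 2).aestronglyMeasurable) (fun ω => ?_)
    rw [abs_pow]
    exact pow_le_pow_left₀ (abs_nonneg _) (hgb n ω) 2
  set r : ℝ := Real.sqrt (1 / m1) with hr
  have hr0 : 0 ≤ r := Real.sqrt_nonneg _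
  have hr1 : r < 1 := by
    have h1 : (1:ℝ) / m1 < 1 := by rw [div_lt_one hm0]; exact hm1
    have h2 : r ^ 2 = 1 / m1 := Real.sq_sqrt (by positivity)
    nlinarith [hr0]
  have hgL1 : ∀ n, ∫ ω, |g n ω| ∂P ≤ Real.sqrt K * r ^ n := by
    intro n
    have h1 : ∫ ω, g n ω ^ 2 ∂P ≤ K * (1 / m1) ^ n := by
      have h := gwW_L2 (P := P) hd hmeas hindep hm1 hmom hmom2 (N := n) (n := n+1)
        (Nat.le_succ n)
      refine le_trans h ?_
      have h2 : (0:ℝ) ≤ (1 / m1) ^ (n+1) := by positivity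
      nlinarith [hKnn]
    calc ∫ ω, |g n ω| ∂P ≤ Real.sqrt (∫ ω, g n ω ^ 2 ∂P) :=
          integral_abs_le_sqrt (hgint n) (hg2int n)
      _ ≤ Real.sqrt (K * (1 / m1) ^ n) := Real.sqrt_le_sqrt h1
      _ = Real.sqrt K * r ^ n := by
          rw [Real.sqrt_mul hKnn,
            show (1 / m1) ^ n = (r ^ n) ^ 2 from by
              rw [hr, ← pow_mul, mul_comm, pow_mul, Real.sq_sqrt (by positivity : (0:ℝ) ≤ 1/m1)],
            Real.sqrt_sq (by positivity)]
  have hsumK : Summable (fun n => Real.sqrt K * r ^ n) :=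
    (summable_geometric_of_lt_one hr0 hr1).mul_left _
  have hlin : ∫⁻ ω, ∑' n, (‖g n ω‖₊ : ℝ≥0∞) ∂P ≠ ⊤ := by
    rw [lintegral_tsum (fun n => ((hgm n).nnnorm.coe_nnreal_ennreal).aemeasurable)]
    have heach : ∀ n, ∫⁻ ω, (‖g n ω‖₊ : ℝ≥0∞) ∂P ≤ ENNReal.ofReal (Real.sqrt K * r ^ n) := by
      intro n
      simp_rw [← enorm_eq_nnnorm]
      rw [← ofReal_integral_norm_eq_lintegral_enorm (hgint n)]
      apply ENNReal.ofReal_le_ofReal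
      refine le_trans (le_of_eq (integral_congr_ae (ae_of_all _ fun ω => ?_))) (hgL1 n)
      exact Real.norm_eq_abs _
    refine ne_of_lt (lt_of_le_of_lt (ENNReal.tsum_le_tsum heach) ?_)
    rw [← ENNReal.ofReal_tsum_of_nonneg (fun n => by positivity) hsumK]
    exact ENNReal.ofReal_lt_top
  have hfin := ae_lt_top (Measurable.ennreal_tsum fun n => (hgm n).nnnorm.coe_nnreal_ennreal)
    hlin
  filter_upwards [hfin] with ω hω
  have hsummable : Summable fun n => ‖g n ω‖₊ := by
    rw [← ENNReal.tsum_coe_ne_top_iff_summable]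
    exact hω.ne
  have hdist : Summable fun n => dist (gwW d ξ m1 n ω) (gwW d ξ m1 (n+1) ω) := by
    refine (NNReal.summable_coe.2 hsummable).congr fun n => ?_
    rw [coe_nnnorm, Real.norm_eq_abs, Real.dist_eq, abs_sub_comm]
  exact cauchySeq_tendsto_of_complete (cauchySeq_of_summable_dist hdist)

end Steps

end GWaux

open GWaux

/-- The martingale (W_n) converges almost surely and in L² to the nonnegative random
variable W_∞ = limsup W_n, with E[W_∞] = 1. -/
theorem gw_martingale_convergence
    {Ω : Type*} [MeasurableSpace Ω] (P : MeasureTheory.Measure Ω)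
    [MeasureTheory.IsProbabilityMeasure P]
    (d : ℕ) (hd : 2 ≤ d) (m : ℝ) (hm : 1 < m)
    (μ : MeasureTheory.Measure ℕ) [MeasureTheory.IsProbabilityMeasure μ]
    (hsupp : ∀ k : ℕ, d < k → μ {k} = 0)
    (hmean : ∑' k : ℕ, (k : ℝ) * (μ {k}).toReal = m)
    (ξ : ℕ → ℕ → Ω → ℕ)
    (hmeas : ∀ n i, Measurable (ξ n i))
    (hlaw : ∀ n i, MeasureTheory.Measure.map (ξ n i) P = μ)
    (hindep : ProbabilityTheory.iIndepFun
      (fun p : ℕ × ℕ => ξ p.1 p.2) P)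
    (Z : ℕ → Ω → ℕ) (hZ0 : ∀ ω, Z 0 ω = 1)
    (hZsucc : ∀ n ω, Z (n + 1) ω = ∑ i ∈ Finset.range (Z n ω), ξ n i ω)
    (W : ℕ → Ω → ℝ) (hW : ∀ n ω, W n ω = (Z n ω : ℝ) / m ^ n)
    (Winf : Ω → ℝ)
    (hWinf : ∀ ω, Winf ω = Filter.limsup (fun n => W n ω) Filter.atTop) :
    (∀ᵐ ω ∂P, Filter.Tendsto (fun n => W n ω) Filter.atTop (nhds (Winf ω))) ∧
    Filter.Tendsto (fun n => ∫ ω, (W n ω - Winf ω) ^ 2 ∂P) Filter.atTop (nhds 0) ∧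
    (∀ᵐ ω ∂P, 0 ≤ Winf ω) ∧
    ∫ ω, Winf ω ∂P = 1 := by
  classical
  have hd1 : 1 ≤ d := le_trans (by norm_num) hd
  have hm0 : (0:ℝ) < m := lt_trans one_pos hm
  -- the law gives no mass above d
  have hnull : μ {k : ℕ | d < k} = 0 := by
    have h1 : {k : ℕ | d < k} = ⋃ k ∈ {k : ℕ | d < k}, {k} := (Set.biUnion_of_singleton _).symm
    rw [h1, measure_biUnion_null_iff (Set.to_countable _)]
    exact fun k hk => hsupp k hk
  -- transporting integrals along the law
  have hmap : ∀ (f : ℕ → ℝ) (n i : ℕ), ∫ ω, f (ξ n i ω) ∂P = ∫ k, f k ∂μ := by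
    intro f n i
    rw [← hlaw n i]
    exact (integral_map (hmeas n i).aemeasurable
      (measurable_from_top (f := f)).aestronglyMeasurable).symm
  have haemin : ∀ᵐ k ∂μ, ((min k d : ℕ) : ℝ) = (k : ℝ) := by
    refine measure_mono_null ?_ hnull
    intro k hk
    simp only [Set.mem_setOf_eq, Set.mem_compl_iff] at hk ⊢
    by_contra h
    push_neg at h
    exact hk (by rw [min_eq_left h])
  have hminint : Integrable (fun k : ℕ => ((min k d : ℕ) : ℝ)) μ := by
    refine integrable_of_bounded (C := (d:ℝ))
      (measurable_from_top (f := fun k : ℕ => ((min k d : ℕ) : ℝ))).aestronglyMeasurable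
      (fun k => ?_)
    rw [abs_of_nonneg (by positivity)]
    exact_mod_cast Nat.cast_le.2 (min_le_right _ _)
  have hmint : Integrable (fun k : ℕ => (k : ℝ)) μ := hminint.congr haemin
  have hmean' : ∫ k, (k : ℝ) ∂μ = m := by
    rw [integral_countable' hmint, ← hmean]
    exact tsum_congr fun k => by rw [smul_eq_mul, mul_comm]; rfl
  have hm1 : ∀ n i, ∫ ω, ((min (ξ n i ω) d : ℕ) : ℝ) ∂P = m := by
    intro n i
    rw [hmap (fun k => ((min k d : ℕ) : ℝ)) n i, ← hmean']
    exact integral_congr_ae haemin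
  set m2 : ℝ := ∫ k, (((min k d : ℕ) : ℝ)) ^ 2 ∂μ with hm2def
  have hm2 : ∀ n i, ∫ ω, (((min (ξ n i ω) d : ℕ) : ℝ)) ^ 2 ∂P = m2 := fun n i =>
    hmap (fun k => ((min k d : ℕ) : ℝ) ^ 2) n i
  -- a.e. identification of Z with the truncated process
  have haeξ : ∀ᵐ ω ∂P, ∀ n i, ξ n i ω ≤ d := by
    rw [ae_all_iff]
    intro n
    rw [ae_all_iff]
    intro i
    rw [ae_iff]
    have h1 : {ω | ¬ ξ n i ω ≤ d} = ξ n i ⁻¹' {k | d < k} := by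
      ext ω; simp [not_le]
    rw [h1, ← Measure.map_apply (hmeas n i) MeasurableSet.of_discrete, hlaw n i]
    exact hnull
  have haeZ : ∀ᵐ ω ∂P, ∀ n, Z n ω = gwZ d ξ n ω ∧ W n ω = gwW d ξ m n ω := by
    filter_upwards [haeξ] with ω hω
    have hZeq : ∀ n, Z n ω = gwZ d ξ n ω := by
      intro n
      induction n with
      | zero => rw [hZ0]; rfl
      | succ n ih =>
        rw [hZsucc, show gwZ d ξ (n+1) ω
          = ∑ i ∈ Finset.range (gwZ d ξ n ω), min (ξ n i ω) d from rfl, ← ih]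
        exact Finset.sum_congr rfl fun i _ => (min_eq_left (hω n i)).symm
    exact fun n => ⟨hZeq n, by rw [hW, hZeq n]; rfl⟩
  -- a.s. convergence
  have hconv := gwW_tendsto (P := P) hd1 hmeas hindep hm hm1 hm2
  have htend : ∀ᵐ ω ∂P, Tendsto (fun n => W n ω) atTop (𝓝 (Winf ω)) ∧
      Tendsto (fun n => gwW d ξ m n ω) atTop (𝓝 (Winf ω)) := by
    filter_upwards [hconv, haeZ] with ω hEx hZeq
    obtain ⟨L, hL⟩ := hEx
    have hTW : Tendsto (fun n => W n ω) atTop (𝓝 L) :=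
      hL.congr fun n => ((hZeq n).2).symm
    have hlim : Winf ω = L := by rw [hWinf ω]; exact hTW.limsup_eq
    rw [hlim]
    exact ⟨hTW, hL⟩
  have hfirst : ∀ᵐ ω ∂P, Tendsto (fun n => W n ω) atTop (𝓝 (Winf ω)) :=
    htend.mono fun ω h => h.1
  -- nonnegativity
  have hnonneg : ∀ᵐ ω ∂P, 0 ≤ Winf ω := by
    filter_upwards [htend] with ω h
    refine ge_of_tendsto h.1 (Eventually.of_forall fun n => ?_)
    rw [hW]
    positivity
  -- the L² estimates
  set K : ℝ := max (m2 - m ^ 2) 0 / (m * (m - 1)) with hKdef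
  have hKnn : 0 ≤ K := div_nonneg (le_max_right _ _) (by nlinarith)
  have hWinf_meas : AEMeasurable Winf P :=
    aemeasurable_of_tendsto_metrizable_ae atTop
      (fun n => (gwW_measurable (ξ := ξ) (m := m) hmeas n).aemeasurable)
      (htend.mono fun ω h => h.2)
  have hdiffint : ∀ N n : ℕ,
      Integrable (fun ω => (gwW d ξ m N ω - gwW d ξ m n ω) ^ 2) P := by
    intro N n
    have hWb : ∀ k (ω : Ω), |gwW d ξ m k ω| ≤ (d:ℝ) ^ k / m ^ k := by
      intro k ω
      rw [show gwW d ξ m k ω = (gwZ d ξ k ω : ℝ) / m ^ k from rfl, abs_div,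
        abs_of_pos (pow_pos hm0 k)]
      gcongr
      exact hZb' hd1 k ω
    refine integrable_of_bounded (C := ((d:ℝ) ^ N / m ^ N + (d:ℝ) ^ n / m ^ n) ^ 2)
      ((((gwW_measurable hmeas N).sub (gwW_measurable hmeas n)).pow_const 2
        ).aestronglyMeasurable) (fun ω => ?_)
    rw [abs_pow]
    exact pow_le_pow_left₀ (abs_nonneg _)
      ((abs_sub _ _).trans (add_le_add (hWb N ω) (hWb n ω))) 2
  have hlb : ∀ N, ∫⁻ ω, ENNReal.ofReal ((gwW d ξ m N ω - Winf ω) ^ 2) ∂P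
      ≤ ENNReal.ofReal (K * (1/m) ^ N) := by
    intro N
    set F : ℕ → Ω → ℝ≥0∞ :=
      fun n ω => ENNReal.ofReal ((gwW d ξ m N ω - gwW d ξ m n ω) ^ 2) with hF
    have hFm : ∀ n, Measurable (F n) := fun n =>
      (((gwW_measurable hmeas N).sub (gwW_measurable hmeas n)).pow_const 2).ennreal_ofReal
    have h1 : ∫⁻ ω, ENNReal.ofReal ((gwW d ξ m N ω - Winf ω) ^ 2) ∂P
        = ∫⁻ ω, liminf (fun n => F n ω) atTop ∂P := by
      refine lintegral_congr_ae ?_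
      filter_upwards [htend] with ω h
      have htF : Tendsto (fun n => F n ω) atTop
          (𝓝 (ENNReal.ofReal ((gwW d ξ m N ω - Winf ω) ^ 2))) := by
        apply (ENNReal.continuous_ofReal.tendsto _).comp
        exact (tendsto_const_nhds.sub h.2).pow 2
      exact htF.liminf_eq.symm
    rw [h1]
    refine le_trans (lintegral_liminf_le hFm) (liminf_le_of_frequently_le' ?_)
    refine (Filter.eventually_atTop.2 ⟨N, fun n hn => ?_⟩).frequently
    have h2 : ∫⁻ ω, F n ω ∂P
        = ENNReal.ofReal (∫ ω, (gwW d ξ m N ω - gwW d ξ m n ω) ^ 2 ∂P) :=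
      (ofReal_integral_eq_lintegral_ofReal (hdiffint N n)
        (ae_of_all _ fun ω => sq_nonneg _)).symm
    rw [h2]
    apply ENNReal.ofReal_le_ofReal
    have hswap : ∫ ω, (gwW d ξ m N ω - gwW d ξ m n ω) ^ 2 ∂P
        = ∫ ω, (gwW d ξ m n ω - gwW d ξ m N ω) ^ 2 ∂P :=
      integral_congr_ae (ae_of_all _ fun ω => by ring)
    rw [hswap]
    refine (gwW_L2 (P := P) hd1 hmeas hindep hm hm1 hm2 hn).trans ?_
    have h3 : (0:ℝ) ≤ (1/m) ^ n := by positivity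
    rw [← hKdef]
    nlinarith
  have hsqint : ∀ N, Integrable (fun ω => (gwW d ξ m N ω - Winf ω) ^ 2) P := by
    intro N
    have hasm : AEStronglyMeasurable (fun ω => (gwW d ξ m N ω - Winf ω) ^ 2) P :=
      (((gwW_measurable hmeas N).aemeasurable.sub hWinf_meas).pow_const 2).aestronglyMeasurable
    refine ⟨hasm, ?_⟩
    rw [hasFiniteIntegral_iff_ofReal (ae_of_all _ fun ω => sq_nonneg _)]
    exact lt_of_le_of_lt (hlb N) ENNReal.ofReal_lt_top
  have hintval : ∀ N, ∫ ω, (gwW d ξ m N ω - Winf ω) ^ 2 ∂P ≤ K * (1/m) ^ N := by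
    intro N
    rw [integral_eq_lintegral_of_nonneg_ae (ae_of_all _ fun ω => sq_nonneg _) (hsqint N).1]
    calc (∫⁻ ω, ENNReal.ofReal ((gwW d ξ m N ω - Winf ω) ^ 2) ∂P).toReal
        ≤ (ENNReal.ofReal (K * (1/m) ^ N)).toReal :=
          ENNReal.toReal_mono ENNReal.ofReal_ne_top (hlb N)
      _ = K * (1/m) ^ N := ENNReal.toReal_ofReal (by positivity)
  have hWint_eq : ∀ n, ∫ ω, (W n ω - Winf ω) ^ 2 ∂P
      = ∫ ω, (gwW d ξ m n ω - Winf ω) ^ 2 ∂P := by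
    intro n
    refine integral_congr_ae ?_
    filter_upwards [haeZ] with ω h
    show (W n ω - Winf ω) ^ 2 = (gwW d ξ m n ω - Winf ω) ^ 2
    rw [(h n).2]
  have hKlim : Tendsto (fun n : ℕ => K * (1/m) ^ n) atTop (𝓝 0) := by
    have h1 : Tendsto (fun n : ℕ => (1/m : ℝ) ^ n) atTop (𝓝 0) :=
      tendsto_pow_atTop_nhds_zero_of_lt_one (by positivity)
        (by rw [div_lt_one hm0]; exact hm)
    simpa using h1.const_mul K
  have hL2 : Tendsto (fun n => ∫ ω, (W n ω - Winf ω) ^ 2 ∂P) atTop (𝓝 0) := by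
    refine squeeze_zero (fun n => integral_nonneg fun ω => sq_nonneg _)
      (fun n => ?_) hKlim
    rw [hWint_eq n]
    exact hintval n
  -- expectation of the limit
  have hWinf_int : Integrable Winf P := by
    refine Integrable.mono' ((integrable_const (2:ℝ)).add (hsqint 0))
      hWinf_meas.aestronglyMeasurable (ae_of_all _ fun ω => ?_)
    have hgw0 : gwW d ξ m 0 ω = 1 := by
      rw [show gwW d ξ m 0 ω = (gwZ d ξ 0 ω : ℝ) / m ^ 0 from rfl]
      norm_num [gwZ]
    show ‖Winf ω‖ ≤ 2 + (gwW d ξ m 0 ω - Winf ω) ^ 2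
    rw [Real.norm_eq_abs, hgw0]
    rcases abs_cases (Winf ω) with ⟨h1, _⟩ <;> nlinarith [sq_nonneg (1 - Winf ω)]
  have hint_gwW : ∀ n, ∫ ω, gwW d ξ m n ω ∂P = 1 := by
    intro n
    rw [show (fun ω => gwW d ξ m n ω) = fun ω => (gwZ d ξ n ω : ℝ) / m ^ n from rfl,
      integral_div, int_gwZ hd1 hmeas hindep hm1 n]
    field_simp
  have hfinal : Tendsto (fun n => ∫ ω, gwW d ξ m n ω ∂P) atTop (𝓝 (∫ ω, Winf ω ∂P)) := by
    rw [tendsto_iff_dist_tendsto_zero]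
    refine squeeze_zero (fun n => dist_nonneg) (fun n => ?_)
      ((Real.continuous_sqrt.tendsto' 0 0 Real.sqrt_zero).comp hKlim)
    rw [Real.dist_eq, ← integral_sub (gwW_integrable hd1 hmeas n) hWinf_int]
    have h1 : |∫ ω, (gwW d ξ m n ω - Winf ω) ∂P| ≤ ∫ ω, |gwW d ξ m n ω - Winf ω| ∂P := by
      have := norm_integral_le_integral_norm (μ := P) (fun ω => gwW d ξ m n ω - Winf ω)
      simpa [Real.norm_eq_abs] using this
    refine h1.trans ?_
    refine (integral_abs_le_sqrt ((gwW_integrable hd1 hmeas n).sub hWinf_int)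
      (hsqint n)).trans ?_
    exact Real.sqrt_le_sqrt (hintval n)
  have hone : ∫ ω, Winf ω ∂P = 1 := by
    refine tendsto_nhds_unique hfinal ?_
    have : (fun n => ∫ ω, gwW d ξ m n ω ∂P) = fun _ => (1:ℝ) := funext hint_gwW
    rw [this]
    exact tendsto_const_nhds
  exact ⟨hfirst, hL2, hnonneg, hone⟩
end
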